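/- arXiv:1503.06188 — 12 statements merged into one kernel-verified Lean document; each statement's English description precedes it below -/
import Mathlib

section
/- If an infinite permutation α (a linear order on ℕ) has an N-monotone subpermutation for some N ≥ 1 (i.e., there is a strictly increasing sequence of indices (n_i) with n_{i+1} - n_i ≤ N such that α[n_i] is strictly increasing, or strictly decreasing, in the order of α), then α is not equidistributed. -/
open Filter

/-- `a` is a representative of the infinite permutation (linear order on ℕ) `r`. -/
def Represents (a : ℕ → ℝ) (r : ℕ → ℕ → Prop) : Prop :=
  ∀ i j : ℕ, r i j ↔ a i < a j

/-- An equidistributed sequence of pairwise distinct reals in `[0,1]`. -/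
def EquidistSeq (a : ℕ → ℝ) : Prop :=
  (∀ n, a n ∈ Set.Icc (0:ℝ) 1) ∧ Function.Injective a ∧
    ∀ t ∈ Set.Icc (0:ℝ) 1,
      Tendsto (fun n => (((Finset.range n).filter fun i => a i < t).card : ℝ) / n)
        atTop (nhds t)

/-- An equidistributed infinite permutation. -/
def EquidistPerm (r : ℕ → ℕ → Prop) : Prop :=
  ∃ a : ℕ → ℝ, EquidistSeq a ∧ Represents a r

/-- `r` has an `N`-monotone subpermutation. -/
def HasNMonotone (r : ℕ → ℕ → Prop) (N : ℕ) : Prop :=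
  ∃ n : ℕ → ℕ, StrictMono n ∧ (∀ i, n (i+1) - n i ≤ N) ∧
    ((∀ i, r (n i) (n (i+1))) ∨ (∀ i, r (n (i+1)) (n i)))

/-- `r` is ultimately `t`-periodic. -/
def UltPeriodicPerm (r : ℕ → ℕ → Prop) (t : ℕ) : Prop :=
  ∃ n0 : ℕ, ∀ i ≥ n0, ∀ j ≥ n0, (r i j ↔ r (i+t) (j+t))

/-- `α[i]` is an `N`-maximal element of `r`. -/
def NMaximal (r : ℕ → ℕ → Prop) (N i : ℕ) : Prop :=
  N < i ∧ ∀ j, j ≠ i → i ≤ j + N → j ≤ i + N → r j i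

/-- `α[i]` is an `N`-minimal element of `r`. -/
def NMinimal (r : ℕ → ℕ → Prop) (N i : ℕ) : Prop :=
  N < i ∧ ∀ j, j ≠ i → i ≤ j + N → j ≤ i + N → r i j

/-- The factor (order type) of length `n` of `r` at position `m`. -/
def permFactor (r : ℕ → ℕ → Prop) (m n : ℕ) : Fin n → Fin n → Prop :=
  fun k l => r (m + (k : ℕ)) (m + (l : ℕ))

/-- The factor complexity of an infinite permutation. -/
noncomputable def permComplexity (r : ℕ → ℕ → Prop) (n : ℕ) : ℕ :=
  Set.ncard {f : Fin n → Fin n → Prop | ∃ m, f = permFactor r m n}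

open Classical in
/-- The underlying binary word of an infinite permutation. -/
noncomputable def underlying (r : ℕ → ℕ → Prop) : ℕ → ℕ :=
  fun i => if r i (i+1) then 0 else 1

/-- The factor of length `n` of the infinite word `w` at position `m`. -/
def factorAt (w : ℕ → ℕ) (m n : ℕ) : List ℕ :=
  (List.range n).map fun k => w (m + k)

/-- `u` is a factor of the infinite word `w`. -/
def IsFactor (w : ℕ → ℕ) (u : List ℕ) : Prop :=
  ∃ m, u = factorAt w m u.length

/-- The factor complexity of an infinite word. -/
noncomputable def wordComplexity (w : ℕ → ℕ) (n : ℕ) : ℕ :=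
  Set.ncard {u : List ℕ | ∃ m, u = factorAt w m n}

def LeftSpecial (w : ℕ → ℕ) (u : List ℕ) : Prop :=
  IsFactor w (0 :: u) ∧ IsFactor w (1 :: u)

def RightSpecial (w : ℕ → ℕ) (u : List ℕ) : Prop :=
  IsFactor w (u ++ [0]) ∧ IsFactor w (u ++ [1])

def Bispecial (w : ℕ → ℕ) (u : List ℕ) : Prop :=
  LeftSpecial w u ∧ RightSpecial w u

/-- A Christoffel word for `w`: `0b1` or `1b0` with `b` a bispecial factor of `w`. -/
def IsChristoffel (w : ℕ → ℕ) (u : List ℕ) : Prop :=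
  ∃ b, Bispecial w b ∧ (u = 0 :: (b ++ [1]) ∨ u = 1 :: (b ++ [0]))

/-- The Sturmian word `s_{σ,ρ}`. -/
noncomputable def sturmianWord (σ ρ : ℝ) : ℕ → ℕ :=
  fun k => if Int.fract (ρ + (k : ℝ) * σ) < 1 - σ then 0 else 1

/-- The word `w` is ultimately `p`-periodic. -/
def UltPeriodicWord (w : ℕ → ℕ) (p : ℕ) : Prop :=
  ∃ N : ℕ, ∀ i ≥ N, w (i + p) = w i

/-- The word defined by `s[k] = ⌊(k+1)σ⌋ − ⌊kσ⌋`. -/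
noncomputable def floorWord (σ : ℝ) : ℕ → ℕ :=
  fun k => (⌊((k : ℝ) + 1) * σ⌋ - ⌊(k : ℝ) * σ⌋).toNat


lemma key_density (a : ℕ → ℝ)
    (hequi : ∀ t ∈ Set.Icc (0:ℝ) 1,
      Tendsto (fun m => (((Finset.range m).filter fun i => a i < t).card : ℝ) / m)
        atTop (nhds t))
    (N : ℕ) (hN : 1 ≤ N) (n : ℕ → ℕ) (hsm : StrictMono n)
    (hgap : ∀ i, n (i+1) ≤ n i + N) (s t : ℝ)
    (hs : s ∈ Set.Icc (0:ℝ) 1) (ht : t ∈ Set.Icc (0:ℝ) 1) (i0 : ℕ)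
    (hst : ∀ j, i0 ≤ j → s ≤ a (n j) ∧ a (n j) < t) :
    (1:ℝ)/N ≤ t - s := by
  classical
  have hNpos : (0:ℝ) < N := by
    have : 0 < N := by omega
    exact_mod_cast this
  -- counting
  have hcount : ∀ k, (((Finset.range (n (i0+k))).filter fun i => a i < s).card) + k
      ≤ (((Finset.range (n (i0+k))).filter fun i => a i < t).card) := by
    intro k
    set m := n (i0+k) with hm
    have hS : ((Finset.Ico i0 (i0+k)).image n).card = k := by
      rw [Finset.card_image_of_injective _ hsm.injective, Nat.card_Ico]; omega
    have hsub : (Finset.range m).filter (fun i => a i < s) ∪ (Finset.Ico i0 (i0+k)).image n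
        ⊆ (Finset.range m).filter (fun i => a i < t) := by
      apply Finset.union_subset
      · intro x hx
        obtain ⟨hx1, hx2⟩ := Finset.mem_filter.mp hx
        refine Finset.mem_filter.mpr ⟨hx1, ?_⟩
        exact lt_of_lt_of_le hx2 (le_of_lt (lt_of_le_of_lt (hst i0 le_rfl).1 (hst i0 le_rfl).2))
      · intro x hx
        obtain ⟨j, hj, rfl⟩ := Finset.mem_image.mp hx
        rw [Finset.mem_Ico] at hj
        exact Finset.mem_filter.mpr ⟨Finset.mem_range.mpr (hsm hj.2), (hst j hj.1).2⟩
    have hdisj : Disjoint ((Finset.range m).filter (fun i => a i < s))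
        ((Finset.Ico i0 (i0+k)).image n) := by
      rw [Finset.disjoint_left]
      intro x hx hx'
      obtain ⟨j, hj, rfl⟩ := Finset.mem_image.mp hx'
      rw [Finset.mem_Ico] at hj
      exact absurd (Finset.mem_filter.mp hx).2 (not_lt.mpr (hst j hj.1).1)
    calc ((Finset.range m).filter fun i => a i < s).card + k
        = ((Finset.range m).filter (fun i => a i < s)
            ∪ (Finset.Ico i0 (i0+k)).image n).card := by
          rw [Finset.card_union_of_disjoint hdisj, hS]
      _ ≤ _ := Finset.card_le_card hsub
  have hbound : ∀ k, n (i0+k) ≤ n i0 + k * N := by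
    intro k
    induction k with
    | zero => simp
    | succ k ih =>
      have h1 := hgap (i0+k)
      have h2 : (k+1)*N = k*N + N := by ring
      have : n (i0 + (k+1)) = n ((i0+k)+1) := by rw [Nat.add_succ]
      omega
  have hmle : ∀ k, i0 + k ≤ n (i0+k) := fun k => hsm.le_apply
  set f : ℕ → ℝ := fun k => (k:ℝ) / ((n i0 : ℝ) + k * N) with hf
  set g : ℕ → ℝ := fun k =>
    ((((Finset.range (n (i0+k))).filter fun i => a i < t).card : ℝ)
      - (((Finset.range (n (i0+k))).filter fun i => a i < s).card : ℝ)) / (n (i0+k)) with hg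
  have hfg : ∀ k, f k ≤ g k := by
    intro k
    have hct : ((((Finset.range (n (i0+k))).filter fun i => a i < s).card : ℝ)) + k
        ≤ (((Finset.range (n (i0+k))).filter fun i => a i < t).card : ℝ) := by
      exact_mod_cast hcount k
    rcases Nat.eq_zero_or_pos k with hk | hk
    · subst hk
      simp only [hf, hg, Nat.cast_zero, zero_div]
      apply div_nonneg _ (by positivity)
      push_cast at hct ⊢
      linarith
    · have h1 : (0:ℝ) < n (i0+k) := by
        have := hmle k
        have : 0 < n (i0+k) := by omega
        exact_mod_cast this
      have h2 : (n (i0+k):ℝ) ≤ (n i0:ℝ) + k*N := by exact_mod_cast hbound k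
      have h3 : (k:ℝ) ≤ (((Finset.range (n (i0+k))).filter fun i => a i < t).card : ℝ)
          - (((Finset.range (n (i0+k))).filter fun i => a i < s).card : ℝ) := by linarith
      have hkpos : (0:ℝ) ≤ k := by positivity
      calc f k ≤ (k:ℝ) / (n (i0+k)) := by
            apply div_le_div_of_nonneg_left hkpos h1 h2
        _ ≤ g k := by
            rw [hg]
            exact (div_le_div_iff_of_pos_right h1).mpr h3
  have hlim_f : Tendsto f atTop (nhds (1/N)) := by
    have h1 : Tendsto (fun k:ℕ => (n i0:ℝ)/k + N) atTop (nhds (0 + N)) :=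
      (tendsto_const_div_atTop_nhds_zero_nat _).add tendsto_const_nhds
    have h2 := h1.inv₀ (by rw [zero_add]; exact ne_of_gt hNpos)
    rw [zero_add] at h2
    have h3 : ∀ᶠ k : ℕ in atTop, ((n i0:ℝ)/k + N)⁻¹ = f k := by
      filter_upwards [eventually_ge_atTop 1] with k hk
      have hk' : (0:ℝ) < k := by exact_mod_cast hk
      rw [hf]
      field_simp
    rw [one_div]
    exact Tendsto.congr' h3 h2
  have hlim_g : Tendsto g atTop (nhds (t - s)) := by
    have hmono2 : StrictMono (fun k => n (i0 + k)) :=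
      hsm.comp (fun x y h => by omega)
    have htop := hmono2.tendsto_atTop
    have h1 := (hequi t ht).comp htop
    have h2 := (hequi s hs).comp htop
    have h3 := h1.sub h2
    refine h3.congr fun k => ?_
    simp only [Function.comp, hg, sub_div]
  exact le_of_tendsto_of_tendsto' hlim_f hlim_g hfg

theorem stmt0 (r : ℕ → ℕ → Prop) (N : ℕ) (hN : 1 ≤ N)
    (hmon : HasNMonotone r N) : ¬ EquidistPerm r := by
  rintro ⟨a, ⟨h01, hinj, hequi⟩, hrep⟩
  obtain ⟨n, hsm, hgap, hmono⟩ := hmon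
  have hgap' : ∀ i, n (i+1) ≤ n i + N := by
    intro i
    have h1 := hgap i
    have h2 := hsm (Nat.lt_succ_self i)
    omega
  set b : ℕ → ℝ := fun i => a (n i) with hb
  have hNpos : (0:ℝ) < 1 / N := by
    apply div_pos one_pos
    have : 0 < N := by omega
    exact_mod_cast this
  cases hmono with
  | inl hinc =>
    have hbm : StrictMono b := strictMono_nat_of_lt_succ fun i => (hrep _ _).mp (hinc i)
    have hbdd : BddAbove (Set.range b) := ⟨1, by rintro x ⟨i, rfl⟩; exact (h01 (n i)).2⟩
    set L := ⨆ i, b i with hL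
    have hle : ∀ i, b i ≤ L := fun i => le_ciSup hbdd i
    have hlt : ∀ i, b i < L := fun i => lt_of_lt_of_le (hbm (Nat.lt_succ_self i)) (hle (i+1))
    have hL0 : (0:ℝ) ≤ L := le_trans (h01 (n 0)).1 (hle 0)
    have hL1 : L ≤ 1 := ciSup_le fun i => (h01 (n i)).2
    have htend : Tendsto b atTop (nhds L) := tendsto_atTop_ciSup hbm.monotone hbdd
    have hkey : ∀ i0, (1:ℝ)/N ≤ L - b i0 := fun i0 =>
      key_density a hequi N hN n hsm hgap' (b i0) L ⟨(h01 _).1, (h01 _).2⟩ ⟨hL0, hL1⟩ i0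
        (fun j hj => ⟨hbm.monotone hj, hlt j⟩)
    have htend0 : Tendsto (fun i0 => L - b i0) atTop (nhds 0) := by
      have h := (tendsto_const_nhds (x := L) (f := atTop)).sub htend
      simpa using h
    have : (1:ℝ)/N ≤ 0 := ge_of_tendsto' htend0 hkey
    linarith
  | inr hdec =>
    have hbm : StrictAnti b := strictAnti_nat_of_succ_lt fun i => (hrep _ _).mp (hdec i)
    have hbdd : BddBelow (Set.range b) := ⟨0, by rintro x ⟨i, rfl⟩; exact (h01 (n i)).1⟩
    set L := ⨅ i, b i with hL
    have hle : ∀ i, L ≤ b i := fun i => ciInf_le hbdd i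
    have hlt : ∀ i, L < b i := fun i => lt_of_le_of_lt (hle (i+1)) (hbm (Nat.lt_succ_self i))
    have hL0 : (0:ℝ) ≤ L := le_ciInf fun i => (h01 (n i)).1
    have hL1 : L ≤ 1 := le_trans (hle 0) (h01 (n 0)).2
    have htend : Tendsto b atTop (nhds L) := tendsto_atTop_ciInf hbm.antitone hbdd
    have hkey : ∀ i0, (1:ℝ)/N ≤ b i0 - L := fun i0 =>
      key_density a hequi N hN n hsm hgap' L (b i0) ⟨hL0, hL1⟩ ⟨(h01 _).1, (h01 _).2⟩ (i0+1)
        (fun j hj => ⟨(hlt j).le, hbm (by omega : i0 < j)⟩)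
    have htend0 : Tendsto (fun i0 => b i0 - L) atTop (nhds 0) := by
      have h := htend.sub (tendsto_const_nhds (x := L) (f := atTop))
      simpa using h
    have : (1:ℝ)/N ≤ 0 := ge_of_tendsto' htend0 hkey
    linarith
end

section
/- An ultimately t-periodic infinite permutation contains a t-monotone subpermutation; specifically, the subsequence of elements at indices that are multiples of t (beyond the preperiod) is eventually monotone with consecutive index gaps equal to t. -/
open Filter

theorem stmt2 (r : ℕ → ℕ → Prop) [IsStrictTotalOrder ℕ r] (t : ℕ) (ht : 1 ≤ t)
    (hper : UltPeriodicPerm r t) :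
    HasNMonotone r t ∧
      ∃ m0 : ℕ, (∀ k ≥ m0, r (k * t) ((k + 1) * t)) ∨
        (∀ k ≥ m0, r ((k + 1) * t) (k * t)) := by
  obtain ⟨n0, hn0⟩ := hper
  have hge : ∀ k : ℕ, n0 ≤ (n0 + k) * t := by
    intro k
    calc n0 ≤ n0 + k := Nat.le_add_right _ _
    _ ≤ (n0 + k) * t := Nat.le_mul_of_pos_right _ ht
  have key : ∀ k, (r ((n0 + k) * t) ((n0 + k + 1) * t) ↔ r (n0 * t) ((n0 + 1) * t)) := by
    intro k
    induction k with
    | zero => simp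
    | succ k ih =>
      have e1 : (n0 + k) * t + t = (n0 + k + 1) * t := by ring
      have e2 : (n0 + k + 1) * t + t = (n0 + k + 1 + 1) * t := by ring
      have h := hn0 ((n0 + k) * t) (hge k) ((n0 + k + 1) * t) (hge (k + 1))
      rw [e1, e2] at h
      have : (n0 + (k + 1)) = (n0 + k + 1) := by ring
      rw [this]
      exact (h.symm.trans ih)
  have hne : n0 * t ≠ (n0 + 1) * t := by
    have : n0 * t < (n0 + 1) * t := by
      have := (Nat.mul_lt_mul_right (show 0 < t from ht)).mpr (show n0 < n0 + 1 by omega)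
      exact this
    omega
  have htri : r (n0 * t) ((n0 + 1) * t) ∨ r ((n0 + 1) * t) (n0 * t) := by
    rcases trichotomous_of r (n0 * t) ((n0 + 1) * t) with h | h | h
    · exact Or.inl h
    · exact absurd h hne
    · exact Or.inr h
  have key' : ∀ k ≥ n0, (r (k * t) ((k + 1) * t) ↔ r (n0 * t) ((n0 + 1) * t)) := by
    intro k hk
    obtain ⟨d, rfl⟩ := Nat.exists_eq_add_of_le hk
    exact key d
  constructor
  · refine ⟨fun i => (n0 + i) * t, ?_, ?_, ?_⟩
    · intro i j hij
      exact (Nat.mul_lt_mul_right (show 0 < t from ht)).mpr (by omega)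
    · intro i
      simp only
      have : (n0 + (i + 1)) * t = (n0 + i) * t + t := by ring
      omega
    · rcases htri with h | h
      · left
        intro i
        have := (key i).mpr h
        have e : n0 + i + 1 = n0 + (i + 1) := by ring
        rwa [e] at this
      · right
        intro i
        have e : n0 + i + 1 = n0 + (i + 1) := by ring
        rcases trichotomous_of r ((n0 + (i + 1)) * t) ((n0 + i) * t) with h' | h' | h'
        · exact h'
        · exfalso
          have : (n0 + i) * t < (n0 + (i + 1)) * t :=
            (Nat.mul_lt_mul_right (show 0 < t from ht)).mpr (by omega)
          omega
        · exfalso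
          have := (key i).mp (by rwa [e])
          exact (irrefl_of r _) (trans_of r this h)
  · refine ⟨n0, ?_⟩
    rcases htri with h | h
    · left
      intro k hk
      exact (key' k hk).mpr h
    · right
      intro k hk
      rcases trichotomous_of r ((k + 1) * t) (k * t) with h' | h' | h'
      · exact h'
      · exfalso
        have : k * t < (k + 1) * t :=
          (Nat.mul_lt_mul_right (show 0 < t from ht)).mpr (by omega)
        omega
      · exfalso
        have := (key' k hk).mp h'
        exact (irrefl_of r _) (trans_of r this h)
end

section
/- In an equidistributed infinite permutation α, for each N ≥ 1 there exists an N-maximal element, i.e., an index i > N such that α[i] ≻ α[j] for all j with 0 < |i - j| ≤ N. Symmetrically, there exists an N-minimal element. -/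
open Filter

lemma exists_ge_of_equidist (a : ℕ → ℝ)
    (heq : ∀ t ∈ Set.Icc (0:ℝ) 1,
      Tendsto (fun n => (((Finset.range n).filter fun i => a i < t).card : ℝ) / n)
        atTop (nhds t))
    (t : ℝ) (ht0 : 0 ≤ t) (ht1 : t < 1) (m : ℕ) : ∃ i, m ≤ i ∧ t ≤ a i := by
  classical
  by_contra hc
  push_neg at hc
  have h := heq t ⟨ht0, ht1.le⟩
  have hlow : Tendsto (fun n : ℕ => 1 - (m:ℝ)/n) atTop (nhds 1) := by
    simpa using tendsto_const_nhds.sub (tendsto_const_div_atTop_nhds_zero_nat (m:ℝ))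
  have hle : ∀ n : ℕ, 1 ≤ n → 1 - (m:ℝ)/n ≤ (((Finset.range n).filter fun i => a i < t).card : ℝ) / n := by
    intro n hpos
    have hsub : (Finset.range n).filter (fun i => m ≤ i) ⊆
        (Finset.range n).filter (fun i => a i < t) := by
      intro i hi
      simp only [Finset.mem_filter] at hi ⊢
      exact ⟨hi.1, hc i hi.2⟩
    have hcard : n - m ≤ ((Finset.range n).filter (fun i => a i < t)).card := by
      refine le_trans ?_ (Finset.card_le_card hsub)
      have h1 : (Finset.range n).filter (fun i => m ≤ i) = Finset.Ico m n := by
        ext i; simp [Finset.mem_Ico, Finset.mem_range]; omega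
      rw [h1, Nat.card_Ico]
    have hnpos : (0:ℝ) < n := by exact_mod_cast hpos
    have h2 : ((n:ℝ) - m)/n ≤ (((Finset.range n).filter fun i => a i < t).card : ℝ) / n := by
      gcongr
      rcases le_or_gt m n with hmn | hmn
      · rw [← Nat.cast_sub hmn]; exact_mod_cast hcard
      · have : ((n:ℝ) - m) ≤ 0 := by
          have : (n:ℝ) < m := by exact_mod_cast hmn
          linarith
        exact this.trans (by positivity)
    calc 1 - (m:ℝ)/n = ((n:ℝ) - m)/n := by field_simp
    _ ≤ _ := h2
  have : (1:ℝ) ≤ t := by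
    refine le_of_tendsto_of_tendsto hlow h ?_
    filter_upwards [eventually_ge_atTop 1] with n hn using hle n hn
  linarith

lemma main_max (a : ℕ → ℝ) (ha : EquidistSeq a) (r : ℕ → ℕ → Prop)
    (hr : Represents a r) (N : ℕ) (hN : 1 ≤ N) : ∃ i, NMaximal r N i := by
  classical
  obtain ⟨hbd, hinj, heq⟩ := ha
  by_cases hone : ∃ m, N < m ∧ a m = 1
  · obtain ⟨m, hm, ham⟩ := hone
    refine ⟨m, hm, fun j hj _ _ => (hr j m).mpr ?_⟩
    have h1 : a j ≤ 1 := (hbd j).2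
    have h2 : a j ≠ a m := fun h => hj (hinj h)
    rw [ham]; exact lt_of_le_of_ne h1 (ham ▸ h2)
  · push_neg at hone
    have hlt1 : ∀ m, N < m → a m < 1 := fun m hm => lt_of_le_of_ne (hbd m).2 (hone m hm)
    set t' : ℝ := 1 - 1/(2*N) with ht'def
    have hNpos : (0:ℝ) < N := by exact_mod_cast hN
    have hN1 : (1:ℝ) ≤ N := by exact_mod_cast hN
    have ht'0 : 0 ≤ t' := by
      rw [ht'def]
      have : 1/(2*(N:ℝ)) ≤ 1/2 := by
        apply one_div_le_one_div_of_le <;> linarith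
      linarith
    have ht'1 : t' < 1 := by
      rw [ht'def]
      have : 0 < 1/(2*(N:ℝ)) := by positivity
      linarith
    have hFne : (Finset.Icc (N+1) (2*N)).Nonempty := ⟨N+1, by simp [Finset.mem_Icc]; omega⟩
    set c : ℝ := max t' ((Finset.Icc (N+1) (2*N)).sup' hFne a) with hcdef
    have hc1 : c < 1 := by
      apply max_lt ht'1
      rw [Finset.sup'_lt_iff]
      intro m hm
      exact hlt1 m (by simp [Finset.mem_Icc] at hm; omega)
    have hcF : ∀ m, N < m → m ≤ 2*N → a m ≤ c := by
      intro m h1 h2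
      exact le_trans (Finset.le_sup' a (by simp [Finset.mem_Icc]; omega)) (le_max_right _ _)
    have hct' : t' ≤ c := le_max_left _ _
    -- initial point
    obtain ⟨i0, hi0ge, hi0a⟩ := exists_ge_of_equidist a heq ((c+1)/2)
      (by have := ht'0.trans hct'; linarith) (by linarith) (2*N+1)
    have hi0 : 2*N < i0 := hi0ge
    have hci0 : c < a i0 := by linarith
    by_contra hno
    have step : ∀ i, 2*N < i → c < a i →
        ∃ j, (2*N < j ∧ c < a j ∧ a i < a j) ∧ (i ≤ j + N ∧ j ≤ i + N) := by
      intro i hi hci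
      have hnm : ¬ NMaximal r N i := fun h => hno ⟨i, h⟩
      have hNi : N < i := by omega
      have h2 : ¬ ∀ j, j ≠ i → i ≤ j + N → j ≤ i + N → r j i := fun h => hnm ⟨hNi, h⟩
      push_neg at h2
      obtain ⟨j, hji, hd1, hd2, hnr⟩ := h2
      have haij : a i < a j := by
        have h3 : ¬ a j < a i := fun h => hnr ((hr j i).mpr h)
        have h4 : a j ≠ a i := fun h => hji (hinj h)
        cases lt_or_gt_of_ne h4 with
        | inl h => exact absurd h h3
        | inr h => exact h
      have hcj : c < a j := hci.trans haij
      have hj2N : 2*N < j := by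
        by_contra h'
        push_neg at h'
        exact absurd (hcF j (by omega) h') (not_le.mpr hcj)
      exact ⟨j, ⟨hj2N, hcj, haij⟩, hd1, hd2⟩
    -- chain
    let T := {i : ℕ // 2*N < i ∧ c < a i}
    let succ : T → T := fun p =>
      ⟨(step p.1 p.2.1 p.2.2).choose, (step p.1 p.2.1 p.2.2).choose_spec.1.1,
        (step p.1 p.2.1 p.2.2).choose_spec.1.2.1⟩
    let g : ℕ → T := fun k => Nat.rec ⟨i0, hi0, hci0⟩ (fun _ p => succ p) k
    have hg0 : (g 0).1 = i0 := rfl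
    have hgstep : ∀ k, a (g k).1 < a (g (k+1)).1 ∧ (g k).1 ≤ (g (k+1)).1 + N ∧
        (g (k+1)).1 ≤ (g k).1 + N := by
      intro k
      have hs := (step (g k).1 (g k).2.1 (g k).2.2).choose_spec
      exact ⟨hs.1.2.2, hs.2.1, hs.2.2⟩
    have hmono : StrictMono (fun k => a (g k).1) :=
      strictMono_nat_of_lt_succ (fun k => (hgstep k).1)
    have ginj : Function.Injective (fun k => (g k).1) := by
      intro k l hkl
      exact hmono.injective (congrArg a hkl)
    have gunb : ∀ m, ∃ k, m < (g k).1 := by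
      intro m
      by_contra hcon
      push_neg at hcon
      have hsub : Set.range (fun k => (g k).1) ⊆ Set.Iic m := by
        rintro x ⟨k, rfl⟩; exact hcon k
      exact ((Set.infinite_range_of_injective ginj).mono hsub) (Set.finite_Iic m)
    have hwin : ∀ m, i0 ≤ m → ∃ k, m < (g k).1 ∧ (g k).1 ≤ m + N := by
      intro m hm
      have hex : ∃ k, m < (g k).1 := gunb m
      have hk0 : m < (g (Nat.find hex)).1 := Nat.find_spec hex
      have hk0ne : Nat.find hex ≠ 0 := by
        intro h
        rw [h, hg0] at hk0; omega
      obtain ⟨k1, hk1⟩ := Nat.exists_eq_succ_of_ne_zero hk0ne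
      rw [Nat.succ_eq_add_one] at hk1
      have hprev : ¬ m < (g k1).1 := Nat.find_min hex (by omega)
      have hNle := (hgstep k1).2.2
      refine ⟨Nat.find hex, hk0, ?_⟩
      rw [hk1]
      omega
    -- lower bound on counts
    have hcount : ∀ K : ℕ, K + 1 ≤
        ((Finset.range (i0 + (K+1)*N + 1)).filter (fun i => c < a i)).card := by
      intro K
      have hsel : ∀ k : ℕ, ∃ e, (i0 + k*N < e ∧ e ≤ i0 + (k+1)*N) ∧ c < a e := by
        intro k
        obtain ⟨kk, h1, h2⟩ := hwin (i0 + k*N) (Nat.le_add_right _ _)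
        refine ⟨(g kk).1, ⟨h1, ?_⟩, (g kk).2.2⟩
        have : (k+1)*N = k*N + N := by ring
        omega
      choose e he1 he2 using hsel
      have hinjOn : ∀ x < K+1, ∀ y < K+1, e x = e y → x = y := by
        intro x hx y hy hxy
        by_contra hne
        rcases Nat.lt_or_ge x y with hlt | hge
        · have h1 : e x ≤ i0 + (x+1)*N := (he1 x).2
          have h2 : i0 + y*N < e y := (he1 y).1
          have h3 : (x+1)*N ≤ y*N := Nat.mul_le_mul_right N hlt
          omega
        · have hlt : y < x := by omega
          have h1 : e y ≤ i0 + (y+1)*N := (he1 y).2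
          have h2 : i0 + x*N < e x := (he1 x).1
          have h3 : (y+1)*N ≤ x*N := Nat.mul_le_mul_right N hlt
          omega
      have := Finset.card_le_card_of_injOn e (fun k hk => ?_) (fun x hx y hy hxy => by
        simp only [Finset.coe_range, Set.mem_Iio] at hx hy
        exact hinjOn x hx y hy hxy) (s := Finset.range (K+1))
        (t := (Finset.range (i0 + (K+1)*N + 1)).filter (fun i => c < a i))
      · simpa using this
      · simp only [Finset.mem_coe, Finset.mem_range] at hk
        simp only [Finset.mem_coe, Finset.mem_filter, Finset.mem_range]
        refine ⟨?_, he2 k⟩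
        have h1 : e k ≤ i0 + (k+1)*N := (he1 k).2
        have h3 : (k+1)*N ≤ (K+1)*N := Nat.mul_le_mul_right N (by omega)
        omega
    -- upper bound on counts
    have hupper : ∀ n : ℕ,
        ((Finset.range n).filter (fun i => c < a i)).card +
        ((Finset.range n).filter (fun i => a i < t')).card ≤ n := by
      intro n
      have hdisj : Disjoint ((Finset.range n).filter (fun i => c < a i))
          ((Finset.range n).filter (fun i => a i < t')) := by
        rw [Finset.disjoint_left]
        intro i h1 h2
        simp only [Finset.mem_filter] at h1 h2
        have := h1.2
        have := h2.2
        linarith [hct']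
      calc ((Finset.range n).filter (fun i => c < a i)).card +
            ((Finset.range n).filter (fun i => a i < t')).card
          = (((Finset.range n).filter (fun i => c < a i)) ∪
            ((Finset.range n).filter (fun i => a i < t'))).card :=
            (Finset.card_union_of_disjoint hdisj).symm
        _ ≤ (Finset.range n).card := Finset.card_le_card
            (Finset.union_subset (Finset.filter_subset _ _) (Finset.filter_subset _ _))
        _ = n := Finset.card_range n
    -- limits
    set nK : ℕ → ℕ := fun K => i0 + (K+1)*N + 1 with hnKdef
    have hnKtop : Tendsto nK atTop atTop := by
      apply tendsto_atTop_mono (fun K => ?_) tendsto_id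
      simp only [hnKdef, id]
      have : K + 1 ≤ (K+1)*N := Nat.le_mul_of_pos_right _ (by omega)
      omega
    have hL2 : Tendsto (fun K => (((Finset.range (nK K)).filter (fun i => a i < t')).card : ℝ)
        / (nK K)) atTop (nhds t') := (heq t' ⟨ht'0, ht'1.le⟩).comp hnKtop
    have hL1 : Tendsto (fun K : ℕ => ((K:ℝ)+1) / (nK K)) atTop (nhds (1/(N:ℝ))) := by
      have h0 : Tendsto (fun K : ℕ => ((i0:ℝ)+1)/((K:ℝ)+1)) atTop (nhds 0) := by
        apply Tendsto.div_atTop tendsto_const_nhds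
        exact tendsto_atTop_add_const_right _ 1 tendsto_natCast_atTop_atTop
      have hd : Tendsto (fun K : ℕ => (N:ℝ) + ((i0:ℝ)+1)/((K:ℝ)+1)) atTop (nhds (N:ℝ)) := by
        simpa using (tendsto_const_nhds (x := (N:ℝ)) (f := atTop)).add h0
      have h1 : Tendsto (fun K : ℕ => 1/((N:ℝ) + ((i0:ℝ)+1)/((K:ℝ)+1))) atTop
          (nhds (1/(N:ℝ))) :=
        (tendsto_const_nhds (x := (1:ℝ)) (f := atTop)).div hd hNpos.ne'
      refine Tendsto.congr (fun K => ?_) h1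
      have hK1 : ((K:ℝ)+1) ≠ 0 := by positivity
      have hnk : ((nK K : ℕ) : ℝ) = (i0:ℝ) + ((K:ℝ)+1)*N + 1 := by
        simp only [hnKdef]; push_cast; try ring
      have hd1 : (0:ℝ) < (N:ℝ) + ((i0:ℝ)+1)/((K:ℝ)+1) := by positivity
      have hd2 : (0:ℝ) < (i0:ℝ) + ((K:ℝ)+1)*(N:ℝ) + 1 := by positivity
      rw [hnk, div_eq_div_iff hd1.ne' hd2.ne']
      field_simp
      try ring
    have key : ∀ K : ℕ, ((K:ℝ)+1)/(nK K) ≤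
        1 - (((Finset.range (nK K)).filter (fun i => a i < t')).card : ℝ)/(nK K) := by
      intro K
      have hnpos : (0:ℝ) < nK K := by
        have : 0 < nK K := by simp [hnKdef]
        exact_mod_cast this
      have h1 := hcount K
      have h2 := hupper (nK K)
      have h3 : (K:ℝ) + 1 + (((Finset.range (nK K)).filter (fun i => a i < t')).card : ℝ)
          ≤ (nK K : ℝ) := by
        have : (K + 1) + ((Finset.range (nK K)).filter (fun i => a i < t')).card ≤ nK K := by
          calc (K+1) + ((Finset.range (nK K)).filter (fun i => a i < t')).card
              ≤ ((Finset.range (nK K)).filter (fun i => c < a i)).card +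
                ((Finset.range (nK K)).filter (fun i => a i < t')).card := by
                exact Nat.add_le_add_right (h1) _
            _ ≤ nK K := h2
        exact_mod_cast this
      have h4 : ((K:ℝ)+1) ≤ (nK K : ℝ) - (((Finset.range (nK K)).filter (fun i => a i < t')).card : ℝ) := by
        linarith
      calc ((K:ℝ)+1)/(nK K)
          ≤ ((nK K:ℝ) - (((Finset.range (nK K)).filter (fun i => a i < t')).card : ℝ))/(nK K) := by
            gcongr
        _ = 1 - (((Finset.range (nK K)).filter (fun i => a i < t')).card : ℝ)/(nK K) := by
            rw [sub_div, div_self hnpos.ne']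
    have hL2' : Tendsto (fun K => 1 - (((Finset.range (nK K)).filter (fun i => a i < t')).card : ℝ)/(nK K)) atTop (nhds (1 - t')) :=
      (tendsto_const_nhds (x := (1:ℝ)) (f := atTop)).sub hL2
    have hfin : (1:ℝ)/N ≤ 1 - t' :=
      le_of_tendsto_of_tendsto' hL1 hL2' key
    rw [ht'def] at hfin
    have : (1:ℝ)/N ≤ 1/(2*N) := by linarith
    have h2N : (1:ℝ)/(2*N) < 1/N := by
      apply one_div_lt_one_div_of_lt hNpos
      linarith
    linarith

lemma equidist_flip (a : ℕ → ℝ) (ha : EquidistSeq a) : EquidistSeq (fun n => 1 - a n) := by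
  classical
  obtain ⟨hbd, hinj, heq⟩ := ha
  refine ⟨fun n => ⟨by simp only; linarith [(hbd n).2], by simp only; linarith [(hbd n).1]⟩,
    fun i j hij => hinj (by dsimp at hij; linarith), ?_⟩
  intro t ht
  set s : ℝ := 1 - t with hsdef
  have hs : s ∈ Set.Icc (0:ℝ) 1 := ⟨by linarith [ht.2], by linarith [ht.1]⟩
  have hA := heq s hs
  have hAB : ∀ n, ((Finset.range n).filter (fun i => a i < s)).card +
      ((Finset.range n).filter (fun i => s ≤ a i)).card = n := by
    intro n
    have h1 : (Finset.range n).filter (fun i => s ≤ a i) =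
        (Finset.range n).filter (fun i => ¬ a i < s) := by
      apply Finset.filter_congr
      intro i _
      simp [not_lt]
    rw [h1, Finset.card_filter_add_card_filter_not, Finset.card_range]
  have hCB : ∀ n, ((Finset.range n).filter (fun i => s < a i)).card ≤
      ((Finset.range n).filter (fun i => s ≤ a i)).card := by
    intro n
    apply Finset.card_le_card
    intro i hi
    simp only [Finset.mem_filter] at hi ⊢
    exact ⟨hi.1, hi.2.le⟩
  have hBC : ∀ n, ((Finset.range n).filter (fun i => s ≤ a i)).card ≤
      ((Finset.range n).filter (fun i => s < a i)).card + 1 := by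
    intro n
    have hsub : (Finset.range n).filter (fun i => s ≤ a i) ⊆
        ((Finset.range n).filter (fun i => s < a i)) ∪
        ((Finset.range n).filter (fun i => a i = s)) := by
      intro i hi
      simp only [Finset.mem_filter, Finset.mem_union] at hi ⊢
      rcases lt_or_eq_of_le hi.2 with h | h
      · exact Or.inl ⟨hi.1, h⟩
      · exact Or.inr ⟨hi.1, h.symm⟩
    have hone : ((Finset.range n).filter (fun i => a i = s)).card ≤ 1 := by
      apply Finset.card_le_one.mpr
      intro i hi j hj
      simp only [Finset.mem_filter] at hi hj
      exact hinj (hi.2.trans hj.2.symm)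
    calc ((Finset.range n).filter (fun i => s ≤ a i)).card
        ≤ (((Finset.range n).filter (fun i => s < a i)) ∪
          ((Finset.range n).filter (fun i => a i = s))).card := Finset.card_le_card hsub
      _ ≤ ((Finset.range n).filter (fun i => s < a i)).card +
          ((Finset.range n).filter (fun i => a i = s)).card := Finset.card_union_le _ _
      _ ≤ ((Finset.range n).filter (fun i => s < a i)).card + 1 := by omega
  have hgoalfun : ∀ n, ((Finset.range n).filter (fun i => (1:ℝ) - a i < t)) =
      ((Finset.range n).filter (fun i => s < a i)) := by
    intro n
    apply Finset.filter_congr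
    intro i _
    constructor
    · intro h; simp only [hsdef]; linarith
    · intro h; simp only [hsdef] at h; linarith
  have hup : Tendsto (fun n : ℕ => 1 - (((Finset.range n).filter (fun i => a i < s)).card : ℝ)/n)
      atTop (nhds t) := by
    have := (tendsto_const_nhds (x := (1:ℝ)) (f := atTop)).sub hA
    have hst : (1:ℝ) - s = t := by rw [hsdef]; ring
    rwa [hst] at this
  have hlo : Tendsto (fun n : ℕ => 1 - (((Finset.range n).filter (fun i => a i < s)).card : ℝ)/n
      - 1/n) atTop (nhds t) := by
    have := hup.sub (tendsto_one_div_atTop_nhds_zero_nat)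
    simpa using this
  refine tendsto_of_tendsto_of_tendsto_of_le_of_le' hlo hup ?_ ?_
  · filter_upwards [eventually_ge_atTop 1] with n hn
    have hnpos : (0:ℝ) < n := by exact_mod_cast hn
    have h1 : (n:ℝ) - (((Finset.range n).filter (fun i => a i < s)).card : ℝ) - 1 ≤
        (((Finset.range n).filter (fun i => (1:ℝ) - a i < t)).card : ℝ) := by
      rw [hgoalfun n]
      have := hAB n
      have := hBC n
      have hle : n ≤ ((Finset.range n).filter (fun i => a i < s)).card +
          (((Finset.range n).filter (fun i => s < a i)).card + 1) := by omega
      have := (Nat.cast_le (α := ℝ)).mpr hle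
      push_cast at this
      linarith
    have h2 : 1 - (((Finset.range n).filter (fun i => a i < s)).card : ℝ)/n - 1/n =
        ((n:ℝ) - (((Finset.range n).filter (fun i => a i < s)).card : ℝ) - 1)/n := by
      field_simp
    rw [h2]
    exact div_le_div_of_nonneg_right h1 hnpos.le |>.trans_eq rfl
  · filter_upwards [eventually_ge_atTop 1] with n hn
    have hnpos : (0:ℝ) < n := by exact_mod_cast hn
    have h1 : (((Finset.range n).filter (fun i => (1:ℝ) - a i < t)).card : ℝ) ≤
        (n:ℝ) - (((Finset.range n).filter (fun i => a i < s)).card : ℝ) := by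
      rw [hgoalfun n]
      have := hAB n
      have := hCB n
      have hle : ((Finset.range n).filter (fun i => s < a i)).card +
          ((Finset.range n).filter (fun i => a i < s)).card ≤ n := by omega
      have := (Nat.cast_le (α := ℝ)).mpr hle
      push_cast at this
      linarith
    have h2 : 1 - (((Finset.range n).filter (fun i => a i < s)).card : ℝ)/n =
        ((n:ℝ) - (((Finset.range n).filter (fun i => a i < s)).card : ℝ))/n := by
      field_simp
    rw [h2]
    exact div_le_div_of_nonneg_right h1 hnpos.le


theorem stmt3 (r : ℕ → ℕ → Prop) (h : EquidistPerm r) (N : ℕ) (hN : 1 ≤ N) :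
    (∃ i, NMaximal r N i) ∧ (∃ i, NMinimal r N i) := by
  obtain ⟨a, ha, hra⟩ := h
  refine ⟨main_max a ha r hra N hN, ?_⟩
  have hb : EquidistSeq (fun n => 1 - a n) := equidist_flip a ha
  have hrb : Represents (fun n => 1 - a n) (fun i j => r j i) := by
    intro i j
    show r j i ↔ _
    rw [hra j i]
    constructor
    · intro hj; simp only; linarith
    · intro hj; simp only at hj; linarith
  obtain ⟨i, hi1, hi2⟩ := main_max (fun n => 1 - a n) hb (fun i j => r j i) hrb N hN
  exact ⟨i, hi1, fun j h1 h2 h3 => hi2 j h1 h2 h3⟩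
end

section
/- If an infinite permutation α has no N-maximal element, then α has an N-monotone subpermutation (either an N-growing or an N-decreasing one). -/
open Filter

section StmtAux

/-- `i` has a larger element within distance `N`. -/
def SAlive (s : ℕ → ℕ → Prop) (N i : ℕ) : Prop :=
  ∃ j, j ≠ i ∧ i ≤ j + N ∧ j ≤ i + N ∧ s i j

open Classical in
noncomputable def spick (s : ℕ → ℕ → Prop) (N i : ℕ) : ℕ :=
  if h : SAlive s N i then h.choose else i

lemma spick_spec {s : ℕ → ℕ → Prop} {N i : ℕ} (h : SAlive s N i) :
    spick s N i ≠ i ∧ i ≤ spick s N i + N ∧ spick s N i ≤ i + N ∧ s i (spick s N i) := by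
  rw [spick, dif_pos h]
  exact h.choose_spec

noncomputable def swalk (s : ℕ → ℕ → Prop) (N x0 k : ℕ) : ℕ := (spick s N)^[k] x0

lemma swalk_succ (s : ℕ → ℕ → Prop) (N x0 k : ℕ) :
    swalk s N x0 (k+1) = spick s N (swalk s N x0 k) :=
  Function.iterate_succ_apply' _ _ _

/-- Record times of an unbounded sequence. -/
noncomputable def rect (w : ℕ → ℕ) (hw : ∀ M, ∃ k, M < w k) : ℕ → ℕ
  | 0 => 0
  | j+1 => Nat.find (hw (w (rect w hw j)))

lemma rect_succ (w : ℕ → ℕ) (hw : ∀ M, ∃ k, M < w k) (j : ℕ) :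
    rect w hw (j+1) = Nat.find (hw (w (rect w hw j))) := rfl

lemma growing (s : ℕ → ℕ → Prop) (N : ℕ)
    (htr : ∀ a b c, s a b → s b c → s a c)
    (hirr : ∀ a, ¬ s a a)
    (hconn : ∀ a b, a ≠ b → s a b ∨ s b a)
    (H2 : ∀ i, N < i → SAlive s N i)
    (H3 : ∀ m, ∃ j, j ≠ m ∧ s m j) :
    ∃ n : ℕ → ℕ, StrictMono n ∧ (∀ i, n (i+1) - n i ≤ N) ∧ ∀ i, s (n i) (n (i+1)) := by
  -- uniqueness of dead points
  have huniq : ∀ d d', ¬ SAlive s N d → ¬ SAlive s N d' → d = d' := by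
    intro d d' hd hd'
    by_contra hne
    have hdN : d ≤ N := by by_contra hgt; exact hd (H2 d (by omega))
    have hdN' : d' ≤ N := by by_contra hgt; exact hd' (H2 d' (by omega))
    rcases hconn d d' hne with hs | hs
    · exact hd ⟨d', fun he => hne he.symm, by omega, by omega, hs⟩
    · exact hd' ⟨d, fun he => hne he, by omega, by omega, hs⟩
  have hx0 : ∃ x0, ∀ k, SAlive s N (swalk s N x0 k) := by
    by_cases hdead : ∃ d, ¬ SAlive s N d
    · obtain ⟨d, hd⟩ := hdead
      obtain ⟨j0, hj0ne, hj0⟩ := H3 d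
      refine ⟨j0, fun k => ?_⟩
      have key : ∀ k, SAlive s N (swalk s N j0 k) ∧ s d (swalk s N j0 k) := by
        intro k
        induction k with
        | zero =>
          refine ⟨?_, hj0⟩
          by_contra ha
          exact hj0ne (huniq _ _ ha hd)
        | succ k ih =>
          obtain ⟨ha, hs⟩ := ih
          have hp := spick_spec ha
          rw [swalk_succ]
          have hs' : s d (spick s N (swalk s N j0 k)) := htr _ _ _ hs hp.2.2.2
          refine ⟨?_, hs'⟩
          by_contra ha'
          have hde := huniq _ _ ha' hd
          rw [hde] at hs'
          exact hirr d hs'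
      exact (key k).1
    · push_neg at hdead
      exact ⟨0, fun k => hdead _⟩
  obtain ⟨x0, hal⟩ := hx0
  have hstep : ∀ k, s (swalk s N x0 k) (swalk s N x0 (k+1)) ∧
      swalk s N x0 (k+1) ≤ swalk s N x0 k + N := by
    intro k
    have hp := spick_spec (hal k)
    rw [swalk_succ]
    exact ⟨hp.2.2.2, hp.2.2.1⟩
  have hchain : ∀ k l, k < l → s (swalk s N x0 k) (swalk s N x0 l) := by
    intro k l hkl
    induction l, hkl using Nat.le_induction with
    | base => exact (hstep k).1
    | succ l hl ih => exact htr _ _ _ ih (hstep l).1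
  have hunb : ∀ M, ∃ k, M < swalk s N x0 k := by
    intro M
    by_contra hb
    push_neg at hb
    obtain ⟨k, l, hne, he⟩ := Finite.exists_ne_map_eq_of_infinite
      (fun k => (⟨swalk s N x0 k, Nat.lt_succ_of_le (hb k)⟩ : Fin (M+1)))
    have he' : swalk s N x0 k = swalk s N x0 l := congrArg Fin.val he
    rcases lt_trichotomy k l with hkl | hkl | hkl
    · exact hirr _ (he' ▸ hchain k l hkl)
    · exact hne hkl
    · exact hirr _ (he' ▸ hchain l k hkl)
  set t := rect (swalk s N x0) hunb with ht
  have hval : ∀ j, swalk s N x0 (t j) < swalk s N x0 (t (j+1)) := by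
    intro j
    rw [ht, rect_succ]
    exact Nat.find_spec (hunb _)
  have hQ : ∀ j k, k < t j → swalk s N x0 k ≤ swalk s N x0 (t j) := by
    intro j
    cases j with
    | zero => intro k hk; rw [ht] at hk; exact absurd hk (by simp [rect])
    | succ j =>
      intro k hk
      rw [ht, rect_succ] at hk
      have h1 := Nat.find_min (hunb (swalk s N x0 (t j))) hk
      push_neg at h1
      exact le_trans h1 (le_of_lt (hval j))
  have htlt : ∀ j, t j < t (j+1) := by
    intro j
    rcases lt_trichotomy (t j) (t (j+1)) with h1 | h1 | h1
    · exact h1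
    · exact absurd (h1 ▸ hval j) (lt_irrefl _)
    · exact absurd (hQ j _ h1) (not_le_of_gt (hval j))
  have hgap : ∀ j, swalk s N x0 (t (j+1)) ≤ swalk s N x0 (t j) + N := by
    intro j
    have h1 : 1 ≤ t (j+1) := by have := htlt j; omega
    have hm : t (j+1) - 1 < t (j+1) := by omega
    rw [ht, rect_succ] at hm
    have h2 := Nat.find_min (hunb (swalk s N x0 (t j))) hm
    push_neg at h2
    have h3 := (hstep (t (j+1) - 1)).2
    rw [Nat.sub_add_cancel h1] at h3
    calc swalk s N x0 (t (j+1)) ≤ swalk s N x0 (t (j+1) - 1) + N := h3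
      _ ≤ swalk s N x0 (t j) + N := by
          have : swalk s N x0 (t (j+1) - 1) ≤ swalk s N x0 (t j) := by
            rw [ht]; exact h2
          omega
  refine ⟨fun j => swalk s N x0 (t j), strictMono_nat_of_lt_succ hval,
    fun j => ?_, fun j => hchain _ _ (htlt j)⟩
  show swalk s N x0 (t (j+1)) - swalk s N x0 (t j) ≤ N
  have := hgap j; omega

/-- Successive suffix maxima. -/
noncomputable def gmax (r : ℕ → ℕ → Prop)
    (hA : ∀ c, ∃ m, c ≤ m ∧ ∀ j, c ≤ j → j ≠ m → r j m) : ℕ → ℕ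
  | 0 => (hA 0).choose
  | k+1 => (hA (gmax r hA k + 1)).choose

end StmtAux

theorem stmt4 (r : ℕ → ℕ → Prop) [IsStrictTotalOrder ℕ r] (N : ℕ)
    (h : ¬ ∃ i, NMaximal r N i) : HasNMonotone r N := by
  have htr : ∀ a b c : ℕ, r a b → r b c → r a c := fun a b c => trans_of r
  have hirr : ∀ a : ℕ, ¬ r a a := fun a => irrefl_of r a
  have htri : ∀ a b : ℕ, a ≠ b → r a b ∨ r b a := by
    intro a b hne
    rcases trichotomous_of r a b with h1 | h1 | h1
    · exact Or.inl h1
    · exact absurd h1 hne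
    · exact Or.inr h1
  have hnm : ∀ i, N < i → ∃ j, j ≠ i ∧ i ≤ j + N ∧ j ≤ i + N ∧ r i j := by
    intro i hi
    have hni : ¬ NMaximal r N i := fun hm => h ⟨i, hm⟩
    rw [NMaximal] at hni
    push_neg at hni
    obtain ⟨j, hj1, hj2, hj3, hj4⟩ := hni hi
    exact ⟨j, hj1, hj2, hj3, (htri i j (fun he => hj1 he.symm)).resolve_right hj4⟩
  by_cases hA : ∀ c, ∃ m, c ≤ m ∧ ∀ j, c ≤ j → j ≠ m → r j m
  · -- decreasing chain of suffix maxima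
    set m := gmax r hA with hm
    have hspec0 : 0 ≤ m 0 ∧ ∀ j, 0 ≤ j → j ≠ m 0 → r j (m 0) := (hA 0).choose_spec
    have hspecS : ∀ k, m k + 1 ≤ m (k+1) ∧
        ∀ j, m k + 1 ≤ j → j ≠ m (k+1) → r j (m (k+1)) :=
      fun k => (hA (m k + 1)).choose_spec
    have hmono : StrictMono m :=
      strictMono_nat_of_lt_succ fun k => by have := (hspecS k).1; omega
    have hgap : ∀ k, m (k+1) - m k ≤ N := by
      intro k
      by_contra hg
      push_neg at hg
      have hle := (hspecS k).1
      apply h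
      refine ⟨m (k+1), by omega, ?_⟩
      intro j hj1 hj2 hj3
      exact (hspecS k).2 j (by omega) hj1
    refine ⟨m, hmono, hgap, Or.inr fun k => ?_⟩
    cases k with
    | zero => exact hspec0.2 (m 1) (Nat.zero_le _) (hmono Nat.zero_lt_one).ne'
    | succ k =>
      exact (hspecS k).2 (m (k+1+1))
        (by have h1 := (hspecS k).1; have h2 := (hspecS (k+1)).1; omega)
        (hmono (Nat.lt_succ_self _)).ne'
  · push_neg at hA
    obtain ⟨c, hc⟩ := hA
    have hH2 : ∀ i, N < i → SAlive (fun i j => r (i + c) (j + c)) N i := by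
      intro i hi
      obtain ⟨j, hj1, hj2, hj3, hj4⟩ := hnm (i + c) (by omega)
      have hjc : c ≤ j := by omega
      refine ⟨j - c, by omega, by omega, by omega, ?_⟩
      show r (i + c) (j - c + c)
      rw [Nat.sub_add_cancel hjc]
      exact hj4
    have hH3 : ∀ m', ∃ j, j ≠ m' ∧ r (m' + c) (j + c) := by
      intro m'
      obtain ⟨j, hjc, hjne, hjr⟩ := hc (m' + c) (by omega)
      refine ⟨j - c, by omega, ?_⟩
      show r (m' + c) (j - c + c)
      rw [Nat.sub_add_cancel hjc]
      exact (htri (m' + c) j (fun he => hjne he.symm)).resolve_right hjr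
    obtain ⟨n, hn1, hn2, hn3⟩ := growing (fun i j => r (i + c) (j + c)) N
      (fun a b d hab hbd => htr _ _ _ hab hbd)
      (fun a => hirr (a + c))
      (fun a b hne => htri (a + c) (b + c) (by omega))
      hH2 hH3
    refine ⟨fun k => n k + c, fun a b hab => ?_, fun k => ?_, Or.inl fun k => hn3 k⟩
    · show n a + c < n b + c
      have := hn1 hab; omega
    · show n (k+1) + c - (n k + c) ≤ N
      have := hn2 k; omega
end

section
/- For any equidistributed infinite permutation α, the factor complexity satisfies p_α(n) ≥ n for all n ≥ 1. -/
open Filter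

section StmtFiveAux

open Filter

private lemma factors_finite (r : ℕ → ℕ → Prop) (n : ℕ) :
    {f : Fin n → Fin n → Prop | ∃ m, f = permFactor r m n}.Finite :=
  Set.toFinite _

private lemma prefix_pat (r : ℕ → ℕ → Prop) (m k : ℕ) :
    (fun (i j : Fin k) => permFactor r m (k+1) i.castSucc j.castSucc) = permFactor r m k := by
  funext i j
  simp only [permFactor, Fin.coe_castSucc]

private lemma suffix_pat (r : ℕ → ℕ → Prop) (m k : ℕ) :
    (fun (i j : Fin k) => permFactor r m (k+1) i.succ j.succ) = permFactor r (m+1) k := by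
  funext i j
  simp only [permFactor, Fin.val_succ]
  have h1 : m + ((i : ℕ) + 1) = m + 1 + (i : ℕ) := by omega
  have h2 : m + ((j : ℕ) + 1) = m + 1 + (j : ℕ) := by omega
  rw [h1, h2]

private lemma comp_mono (r : ℕ → ℕ → Prop) (k : ℕ) :
    permComplexity r k ≤ permComplexity r (k+1) := by
  have himg : {f : Fin k → Fin k → Prop | ∃ m, f = permFactor r m k} =
      (fun (g : Fin (k+1) → Fin (k+1) → Prop) => fun (i j : Fin k) => g i.castSucc j.castSucc) ''
        {f : Fin (k+1) → Fin (k+1) → Prop | ∃ m, f = permFactor r m (k+1)} := by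
    ext f
    constructor
    · rintro ⟨m, rfl⟩
      exact ⟨permFactor r m (k+1), ⟨m, rfl⟩, prefix_pat r m k⟩
    · rintro ⟨g, ⟨m, rfl⟩, rfl⟩
      exact ⟨m, (prefix_pat r m k).symm⟩
  show Set.ncard _ ≤ Set.ncard _
  rw [himg]
  exact Set.ncard_image_le (factors_finite r (k+1))

private lemma step_lemma (r : ℕ → ℕ → Prop) (k m m' : ℕ)
    (hpre : permFactor r m k = permFactor r m' k)
    (hne : permFactor r m (k+1) ≠ permFactor r m' (k+1)) :
    permComplexity r k + 1 ≤ permComplexity r (k+1) := by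
  classical
  set res : (Fin (k+1) → Fin (k+1) → Prop) → (Fin k → Fin k → Prop) :=
    fun g i j => g i.castSucc j.castSucc with hresdef
  set S : Set (Fin (k+1) → Fin (k+1) → Prop) :=
    {f | ∃ m, f = permFactor r m (k+1)} with hSdef
  have hfin : S.Finite := factors_finite r (k+1)
  have hxS : permFactor r m (k+1) ∈ S := ⟨m, rfl⟩
  have hyS : permFactor r m' (k+1) ∈ S := ⟨m', rfl⟩
  have himg : {f : Fin k → Fin k → Prop | ∃ p, f = permFactor r p k} ⊆
      res '' (S \ {permFactor r m (k+1)}) := by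
    rintro f ⟨p, rfl⟩
    by_cases hpx : permFactor r p (k+1) = permFactor r m (k+1)
    · refine ⟨permFactor r m' (k+1), ⟨hyS, ?_⟩, ?_⟩
      · intro hmem
        exact hne (Set.mem_singleton_iff.mp hmem).symm
      · show res (permFactor r m' (k+1)) = permFactor r p k
        have h1 : res (permFactor r m' (k+1)) = permFactor r m' k := prefix_pat r m' k
        have h2 : res (permFactor r p (k+1)) = permFactor r p k := prefix_pat r p k
        rw [h1, ← hpre, ← prefix_pat r m k, ← hpx]
        exact prefix_pat r p k
    · exact ⟨permFactor r p (k+1), ⟨⟨p, rfl⟩, hpx⟩, prefix_pat r p k⟩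
  have hstep1 : permComplexity r k ≤ (S \ {permFactor r m (k+1)}).ncard := by
    calc permComplexity r k ≤ (res '' (S \ {permFactor r m (k+1)})).ncard :=
          Set.ncard_le_ncard himg (hfin.diff.image _)
    _ ≤ (S \ {permFactor r m (k+1)}).ncard := Set.ncard_image_le hfin.diff
  have hfinal : (S \ {permFactor r m (k+1)}).ncard + 1 = S.ncard :=
    Set.ncard_diff_singleton_add_one hxS hfin
  show permComplexity r k + 1 ≤ S.ncard
  omega

private lemma periodic_contra (r : ℕ → ℕ → Prop) (a : ℕ → ℝ)
    (ha01 : ∀ n, a n ∈ Set.Icc (0:ℝ) 1)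
    (haeq : ∀ t ∈ Set.Icc (0:ℝ) 1,
      Tendsto (fun n => (((Finset.range n).filter fun i => a i < t).card : ℝ) / n)
        atTop (nhds t))
    (harep : Represents a r) (k : ℕ) (hk : 1 ≤ k)
    (hpk : permComplexity r k = k) (hpk1 : permComplexity r (k+1) = k) : False := by
  classical
  -- Determinism
  have hdet : ∀ m m', permFactor r m k = permFactor r m' k →
      permFactor r m (k+1) = permFactor r m' (k+1) := by
    intro m m' hmm
    by_contra hne
    have := step_lemma r k m m' hmm hne
    omega
  -- Pigeonhole
  have hfin := factors_finite r (k+1)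
  have hcardT : hfin.toFinset.card = k := by
    rw [← Set.ncard_eq_toFinset_card _ hfin]
    exact hpk1
  obtain ⟨x, hx, y, hy, hxy, hfxy⟩ :=
    Finset.exists_ne_map_eq_of_card_lt_of_maps_to
      (s := Finset.range (k+1)) (t := hfin.toFinset)
      (f := fun m => permFactor r m (k+1))
      (by rw [hcardT, Finset.card_range]; omega)
      (fun m _ => hfin.mem_toFinset.mpr ⟨m, rfl⟩)
  -- wlog x < y
  have hxk : x < k + 1 := Finset.mem_range.mp hx
  have hyk : y < k + 1 := Finset.mem_range.mp hy
  obtain ⟨m0, m1, hm01, hm1k, hF01⟩ : ∃ m0 m1, m0 < m1 ∧ m1 ≤ k ∧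
      permFactor r m0 (k+1) = permFactor r m1 (k+1) := by
    rcases lt_or_gt_of_ne hxy with h | h
    · exact ⟨x, y, h, by omega, hfxy⟩
    · exact ⟨y, x, h, by omega, hfxy.symm⟩
  set t := m1 - m0 with htdef
  have ht1 : 1 ≤ t := by omega
  have htk : t ≤ k := by omega
  have hm1 : m1 = m0 + t := by omega
  rw [hm1] at hF01
  -- shift invariance
  have hshift : ∀ m m', permFactor r m (k+1) = permFactor r m' (k+1) →
      permFactor r (m+1) (k+1) = permFactor r (m'+1) (k+1) := by
    intro m m' hmm
    have hsuf : permFactor r (m+1) k = permFactor r (m'+1) k := by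
      rw [← suffix_pat r m k, ← suffix_pat r m' k, hmm]
    exact hdet (m+1) (m'+1) hsuf
  -- propagation
  have hper : ∀ j, permFactor r (m0 + j) (k+1) = permFactor r (m0 + j + t) (k+1) := by
    intro j
    induction j with
    | zero => simpa using hF01
    | succ j ih =>
        have := hshift _ _ ih
        have e1 : m0 + j + 1 = m0 + (j+1) := by omega
        have e2 : m0 + j + t + 1 = m0 + (j+1) + t := by omega
        rwa [e1, e2] at this
  have hperiodic : ∀ i, m0 ≤ i → permFactor r i (k+1) = permFactor r (i + t) (k+1) := by
    intro i hi
    have := hper (i - m0)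
    have e1 : m0 + (i - m0) = i := by omega
    rwa [e1] at this
  -- distance-t comparisons
  have hdist : ∀ i, m0 ≤ i → (r i (i + t) ↔ r (i + t) (i + t + t)) := by
    intro i hi
    have hFF := hperiodic i hi
    have h0t := congrFun (congrFun hFF (⟨0, by omega⟩ : Fin (k+1))) (⟨t, by omega⟩ : Fin (k+1))
    simp only [permFactor] at h0t
    rw [show i + (0:ℕ) = i from rfl, show i + t + (0:ℕ) = i + t from rfl] at h0t
    exact iff_of_eq h0t
  -- constant direction along classes
  have hconst : ∀ i, m0 ≤ i → ∀ j, (r (i + j*t) (i + j*t + t) ↔ r i (i + t)) := by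
    intro i hi j
    induction j with
    | zero => simp
    | succ j ih =>
        have e1 : i + (j+1)*t = i + j*t + t := by ring
        rw [e1]
        have := (hdist (i + j*t) (by omega)).symm
        exact this.trans ih
  -- per-class convergence
  have hlim : ∀ s : ℕ, ∃ L : ℝ, Tendsto (fun j => a (m0 + s + j * t)) atTop (nhds L) := by
    intro s
    set base := m0 + s with hbase
    have hbm0 : m0 ≤ base := by omega
    by_cases hdir : r base (base + t)
    · have hmono : Monotone (fun j => a (base + j * t)) := by
        apply monotone_nat_of_le_succ
        intro j
        have hr : r (base + j*t) (base + j*t + t) := (hconst base hbm0 j).mpr hdir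
        have hlt : a (base + j*t) < a (base + j*t + t) := (harep _ _).mp hr
        have e1 : base + (j+1)*t = base + j*t + t := by ring
        simp only [e1]
        exact le_of_lt hlt
      have hbdd : BddAbove (Set.range (fun j => a (base + j * t))) := by
        refine ⟨1, ?_⟩
        rintro z ⟨j, rfl⟩
        exact (ha01 _).2
      exact ⟨_, tendsto_atTop_ciSup hmono hbdd⟩
    · have hanti : Antitone (fun j => a (base + j * t)) := by
        apply antitone_nat_of_succ_le
        intro j
        have hr : ¬ r (base + j*t) (base + j*t + t) := fun hr => hdir ((hconst base hbm0 j).mp hr)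
        have hle : a (base + j*t + t) ≤ a (base + j*t) :=
          le_of_not_gt (fun hlt => hr ((harep _ _).mpr hlt))
        have e1 : base + (j+1)*t = base + j*t + t := by ring
        simp only [e1]
        exact hle
      have hbdd : BddBelow (Set.range (fun j => a (base + j * t))) := by
        refine ⟨0, ?_⟩
        rintro z ⟨j, rfl⟩
        exact (ha01 _).1
      exact ⟨_, tendsto_atTop_ciInf hanti hbdd⟩
  choose L hL using hlim
  -- choose u1 < u2 avoiding the limits and 0, 1
  set Fset : Finset ℝ := insert 0 (insert 1 ((Finset.range t).image L)) with hFset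
  have h0F : (0:ℝ) ∈ Fset := by simp [hFset]
  have h1F : (1:ℝ) ∈ Fset := by simp [hFset]
  have hFne : Fset.Nonempty := ⟨0, h0F⟩
  have hIooInf : (Set.Ioo (0:ℝ) 1).Infinite :=
    Set.infinite_coe_iff.mp (Set.Ioo.infinite (by norm_num))
  obtain ⟨x0, hx0⟩ := (hIooInf.diff (Fset.finite_toSet)).nonempty
  obtain ⟨hx0Ioo, hx0F⟩ := hx0
  set d : ℝ := Fset.inf' hFne (fun y => |y - x0|) with hd
  have hdpos : 0 < d := by
    rw [hd, Finset.lt_inf'_iff]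
    intro y hyF
    have : y ≠ x0 := by
      intro hxy; exact hx0F (by simpa [hxy] using hyF)
    have : y - x0 ≠ 0 := sub_ne_zero.mpr this
    exact abs_pos.mpr this
  have hdle : ∀ y ∈ Fset, d ≤ |y - x0| := fun y hy => Finset.inf'_le _ hy
  set u1 : ℝ := x0 - d/2 with hu1
  set u2 : ℝ := x0 + d/2 with hu2
  have hu12 : u1 < u2 := by rw [hu1, hu2]; linarith
  have hu1pos : 0 < u1 := by
    have := hdle 0 h0F
    have hx0pos : 0 < x0 := hx0Ioo.1
    rw [abs_of_nonpos (by linarith)] at this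
    rw [hu1]; linarith
  have hu2lt : u2 < 1 := by
    have := hdle 1 h1F
    have hx0lt : x0 < 1 := hx0Ioo.2
    rw [abs_of_nonneg (by linarith)] at this
    rw [hu2]; linarith
  have havoid : ∀ s < t, L s < u1 ∨ u2 < L s := by
    intro s hst
    have hmem : L s ∈ Fset := by
      rw [hFset]
      exact Finset.mem_insert_of_mem (Finset.mem_insert_of_mem
        (Finset.mem_image_of_mem L (Finset.mem_range.mpr hst)))
    have := hdle _ hmem
    rcases abs_cases (L s - x0) with ⟨he, _⟩ | ⟨he, _⟩
    · right; rw [hu2]; rw [he] at this; linarith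
    · left; rw [hu1]; rw [he] at this; linarith
  -- per-class eventual avoidance of [u1, u2)
  have hev : ∀ s : ℕ, ∃ J : ℕ, ∀ j ≥ J, s < t →
      ¬(u1 ≤ a (m0 + s + j * t) ∧ a (m0 + s + j * t) < u2) := by
    intro s
    by_cases hst : s < t
    · rcases havoid s hst with hlo | hhi
      · have := (hL s).eventually_lt_const hlo
        rw [eventually_atTop] at this
        obtain ⟨J, hJ⟩ := this
        exact ⟨J, fun j hj _ hc => absurd (hJ j hj) (not_lt.mpr hc.1)⟩
      · have := (hL s).eventually_const_lt hhi
        rw [eventually_atTop] at this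
        obtain ⟨J, hJ⟩ := this
        exact ⟨J, fun j hj _ hc => absurd (hJ j hj) (not_lt.mpr hc.2.le)⟩
    · exact ⟨0, fun j _ hst' _ => hst hst'⟩
  choose J hJ using hev
  set Jmax : ℕ := (Finset.range t).sup J with hJmax
  set N0 : ℕ := m0 + t * (Jmax + 1) with hN0def
  have hN0 : ∀ i, N0 ≤ i → ¬(u1 ≤ a i ∧ a i < u2) := by
    intro i hi
    have him0 : m0 ≤ i := by omega
    set q := i - m0 with hq
    have hqt : t * (Jmax + 1) ≤ q := by omega
    have hs : q % t < t := Nat.mod_lt _ (by omega)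
    have hdiv : Jmax + 1 ≤ q / t := by
      rw [Nat.le_div_iff_mul_le (by omega : 0 < t)]
      calc (Jmax + 1) * t = t * (Jmax + 1) := by ring
      _ ≤ q := hqt
    have hJle : J (q % t) ≤ Jmax := Finset.le_sup (Finset.mem_range.mpr hs)
    have hieq : m0 + q % t + (q / t) * t = i := by
      have := Nat.mod_add_div' q t
      omega
    have := hJ (q % t) (q / t) (by omega) hs
    rwa [hieq] at this
  -- counting
  have hcard : ∀ N : ℕ, (((Finset.range N).filter (fun i => a i < u2)).card : ℝ) ≤
      (((Finset.range N).filter (fun i => a i < u1)).card : ℝ) + N0 := by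
    intro N
    have hsub : (Finset.range N).filter (fun i => a i < u2) ⊆
        ((Finset.range N).filter (fun i => a i < u1)) ∪ Finset.range N0 := by
      intro i hi
      rw [Finset.mem_filter] at hi
      rw [Finset.mem_union]
      by_cases h1 : a i < u1
      · exact Or.inl (Finset.mem_filter.mpr ⟨hi.1, h1⟩)
      · refine Or.inr (Finset.mem_range.mpr ?_)
        by_contra hge
        exact hN0 i (by omega) ⟨le_of_not_gt h1, hi.2⟩
    have := Finset.card_le_card hsub
    have h2 := Finset.card_union_le ((Finset.range N).filter (fun i => a i < u1))
      (Finset.range N0)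
    have h3 : (((Finset.range N).filter (fun i => a i < u2)).card : ℕ) ≤
        ((Finset.range N).filter (fun i => a i < u1)).card + N0 := by
      calc _ ≤ _ := this
      _ ≤ _ := h2
      _ = _ := by rw [Finset.card_range]
    exact_mod_cast h3
  have hT1 : Tendsto (fun N : ℕ =>
      (((Finset.range N).filter (fun i => a i < u1)).card : ℝ) / N) atTop (nhds u1) :=
    haeq u1 ⟨le_of_lt hu1pos, by linarith⟩
  have hT2 : Tendsto (fun N : ℕ =>
      (((Finset.range N).filter (fun i => a i < u2)).card : ℝ) / N) atTop (nhds u2) :=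
    haeq u2 ⟨by linarith, le_of_lt hu2lt⟩
  have hT1' : Tendsto (fun N : ℕ =>
      (((Finset.range N).filter (fun i => a i < u1)).card : ℝ) / N + (N0:ℝ) / N)
      atTop (nhds (u1 + 0)) :=
    hT1.add (tendsto_const_div_atTop_nhds_zero_nat (N0:ℝ))
  have hle : u2 ≤ u1 + 0 := by
    refine le_of_tendsto_of_tendsto' hT2 hT1' ?_
    intro N
    rcases Nat.eq_zero_or_pos N with h0 | hNpos
    · subst h0; simp
    · have hNpos' : (0:ℝ) < N := by exact_mod_cast hNpos
      rw [← add_div]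
      exact div_le_div_of_nonneg_right (hcard N) hNpos'.le
  rw [add_zero] at hle
  linarith

end StmtFiveAux

theorem stmt5 (r : ℕ → ℕ → Prop) (h : EquidistPerm r) (n : ℕ) (hn : 1 ≤ n) :
    n ≤ permComplexity r n := by
  obtain ⟨a, ⟨ha01, hainj, haeq⟩, harep⟩ := h
  induction n, hn using Nat.le_induction with
  | base =>
      have hne : {f : Fin 1 → Fin 1 → Prop | ∃ m, f = permFactor r m 1}.Nonempty :=
        ⟨permFactor r 0 1, 0, rfl⟩
      have := (Set.ncard_pos (factors_finite r 1)).mpr hne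
      exact this
  | succ n hn ih =>
      by_cases hc : n + 1 ≤ permComplexity r (n+1)
      · exact hc
      · exfalso
        have hmono := comp_mono r n
        have h1 : permComplexity r n = n := by omega
        have h2 : permComplexity r (n+1) = n := by omega
        exact periodic_contra r a ha01 haeq harep n hn h1 h2
end

section
/- The equidistributed representative of an equidistributed infinite permutation is unique: if (a[n]) and (b[n]) are both equidistributed sequences in [0,1] of pairwise distinct reals representing the same permutation (a[i] < a[j] ⟺ b[i] < b[j] for all i,j), then a[n] = b[n] for all n. Moreover, a[i] = lim_{n→∞} (1/n)·#{j < n : a[j] < a[i]}. -/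
open Filter

theorem stmt7 (a b : ℕ → ℝ) (ha : EquidistSeq a) (hb : EquidistSeq b)
    (hsame : ∀ i j, a i < a j ↔ b i < b j) :
    (∀ n, a n = b n) ∧
      ∀ i, Tendsto
        (fun n => (((Finset.range n).filter fun j => a j < a i).card : ℝ) / n)
        atTop (nhds (a i)) := by
  have key : ∀ i, Tendsto
      (fun n => (((Finset.range n).filter fun j => a j < a i).card : ℝ) / n)
      atTop (nhds (a i)) := fun i => ha.2.2 (a i) (ha.1 i)
  refine ⟨fun i => ?_, key⟩
  have hfilt : ∀ n, (Finset.range n).filter (fun j => a j < a i)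
      = (Finset.range n).filter (fun j => b j < b i) := fun n =>
    Finset.filter_congr (fun j _ => by simp [hsame j i])
  have hbi : Tendsto
      (fun n => (((Finset.range n).filter fun j => a j < a i).card : ℝ) / n)
      atTop (nhds (b i)) := by
    simp only [hfilt]
    exact hb.2.2 (b i) (hb.1 i)
  exact tendsto_nhds_unique (key i) hbi
end

section
/- If an infinite permutation α has complexity p_α(n) = n for all n ≥ 1, then its underlying binary word s is either ultimately periodic or Sturmian (i.e., p_s(m) = m + 1 for all m). -/
open Filter

private lemma factorAt_eq_iff {w : ℕ → ℕ} {m m' n : ℕ} :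
    factorAt w m n = factorAt w m' n ↔ ∀ k < n, w (m + k) = w (m' + k) := by
  simp [factorAt, List.map_inj_left]

private lemma take_factorAt {w : ℕ → ℕ} {m n : ℕ} :
    (factorAt w m (n+1)).take n = factorAt w m n := by
  simp [factorAt, ← List.map_take, List.take_range, Nat.min_def]

private lemma perm_set_finite (r : ℕ → ℕ → Prop)
    (hcompl : ∀ n : ℕ, 1 ≤ n → permComplexity r n = n) (n : ℕ) (hn : 1 ≤ n) :
    {f : Fin n → Fin n → Prop | ∃ m, f = permFactor r m n}.Finite := by
  by_contra h
  have h2 : {f : Fin n → Fin n → Prop | ∃ m, f = permFactor r m n}.ncard = 0 :=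
    Set.Infinite.ncard h
  have h3 := hcompl n hn
  unfold permComplexity at h3
  omega

open Classical in
private lemma word_upper (r : ℕ → ℕ → Prop)
    (hcompl : ∀ n : ℕ, 1 ≤ n → permComplexity r n = n) (m : ℕ) :
    {u : List ℕ | ∃ k, u = factorAt (underlying r) k m}.Finite ∧
    {u : List ℕ | ∃ k, u = factorAt (underlying r) k m}.ncard ≤ m + 1 := by
  set Φ : (Fin (m+1) → Fin (m+1) → Prop) → List ℕ :=
    fun f => (List.range m).map (fun k =>
      if f ⟨k % (m+1), Nat.mod_lt _ m.succ_pos⟩ ⟨(k+1) % (m+1), Nat.mod_lt _ m.succ_pos⟩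
      then 0 else 1) with hΦ
  have key : ∀ k, factorAt (underlying r) k m = Φ (permFactor r k (m+1)) := by
    intro k
    rw [hΦ]
    unfold factorAt
    apply List.map_congr_left
    intro j hj
    have hj' : j < m := List.mem_range.mp hj
    simp only [permFactor, underlying]
    simp only [show j % (m+1) = j from Nat.mod_eq_of_lt (by omega),
        show (j+1) % (m+1) = j + 1 from Nat.mod_eq_of_lt (by omega)]
    simp [Nat.add_assoc]
  have hpf := perm_set_finite r hcompl (m+1) (by omega)
  have hsub : {u : List ℕ | ∃ k, u = factorAt (underlying r) k m} ⊆
      Φ '' {f : Fin (m+1) → Fin (m+1) → Prop | ∃ k, f = permFactor r k (m+1)} := by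
    rintro u ⟨k, rfl⟩
    exact ⟨permFactor r k (m+1), ⟨k, rfl⟩, (key k).symm⟩
  refine ⟨(hpf.image Φ).subset hsub, ?_⟩
  calc {u : List ℕ | ∃ k, u = factorAt (underlying r) k m}.ncard
      ≤ (Φ '' {f : Fin (m+1) → Fin (m+1) → Prop | ∃ k, f = permFactor r k (m+1)}).ncard :=
        Set.ncard_le_ncard hsub (hpf.image Φ)
    _ ≤ {f : Fin (m+1) → Fin (m+1) → Prop | ∃ k, f = permFactor r k (m+1)}.ncard :=
        Set.ncard_image_le hpf
    _ = m + 1 := hcompl (m+1) (by omega)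


theorem stmt12 (r : ℕ → ℕ → Prop) [IsStrictTotalOrder ℕ r]
    (hcompl : ∀ n : ℕ, 1 ≤ n → permComplexity r n = n) :
    (∃ p : ℕ, 1 ≤ p ∧ UltPeriodicWord (underlying r) p) ∨
      (∀ m : ℕ, wordComplexity (underlying r) m = m + 1) := by
  by_contra hcon
  push_neg at hcon
  obtain ⟨hnp, hns⟩ := hcon
  obtain ⟨m, hm⟩ := hns
  set s := underlying r with hs
  set W : ℕ → Set (List ℕ) := fun n => {u : List ℕ | ∃ k, u = factorAt s k n} with hW
  have hWfin : ∀ n, (W n).Finite := fun n => (word_upper r hcompl n).1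
  have hWc : ∀ n, wordComplexity s n = (W n).ncard := fun n => rfl
  have hup : ∀ n, (W n).ncard ≤ n + 1 := fun n => (word_upper r hcompl n).2
  -- p m ≤ m
  have hpm : (W m).ncard ≤ m := by
    have := hup m
    have hne : wordComplexity s m ≠ m + 1 := hm
    rw [hWc] at hne
    omega
  -- monotonicity
  have hmono : ∀ n, (W n).ncard ≤ (W (n+1)).ncard := by
    intro n
    have hsub : W n ⊆ (List.take n) '' (W (n+1)) := by
      rintro u ⟨k, rfl⟩
      exact ⟨factorAt s k (n+1), ⟨k, rfl⟩, take_factorAt⟩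
    calc (W n).ncard ≤ ((List.take n) '' (W (n+1))).ncard :=
          Set.ncard_le_ncard hsub ((hWfin (n+1)).image _)
      _ ≤ (W (n+1)).ncard := Set.ncard_image_le (hWfin (n+1))
  -- p 0 = 1
  have h0 : (W 0).ncard = 1 := by
    have : W 0 = {([] : List ℕ)} := by
      ext u
      simp [hW, factorAt]
    rw [this, Set.ncard_singleton]
  -- exists n < m with p (n+1) ≤ p n
  obtain ⟨n, hnm, hle⟩ : ∃ n, n < m ∧ (W (n+1)).ncard ≤ (W n).ncard := by
    by_contra h
    push_neg at h
    have grow : ∀ j, j ≤ m → j + 1 ≤ (W j).ncard := by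
      intro j hj
      induction j with
      | zero => omega
      | succ i ih =>
        have h1 := ih (by omega)
        have h2 := h i (by omega)
        omega
    have := grow m le_rfl
    omega
  -- unique right extension
  have uniq : ∀ i j : ℕ, factorAt s i n = factorAt s j n →
      factorAt s i (n+1) = factorAt s j (n+1) := by
    by_contra h
    push_neg at h
    obtain ⟨i, j, heq, hne⟩ := h
    have hyW : factorAt s j (n+1) ∈ W (n+1) := ⟨j, rfl⟩
    have hsurj : W n ⊆ (List.take n) '' (W (n+1) \ {factorAt s j (n+1)}) := by
      rintro v ⟨k, rfl⟩
      by_cases hk : factorAt s k (n+1) = factorAt s j (n+1)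
      · refine ⟨factorAt s i (n+1), ⟨⟨i, rfl⟩, hne⟩, ?_⟩
        rw [take_factorAt, heq, ← take_factorAt (w := s) (m := j), ← hk, take_factorAt]
      · exact ⟨factorAt s k (n+1), ⟨⟨k, rfl⟩, hk⟩, take_factorAt⟩
    have hfd : (W (n+1) \ {factorAt s j (n+1)}).Finite := (hWfin (n+1)).diff
    have h1 : (W n).ncard ≤ (W (n+1) \ {factorAt s j (n+1)}).ncard :=
      le_trans (Set.ncard_le_ncard hsurj (hfd.image _)) (Set.ncard_image_le hfd)
    have h2 : (W (n+1) \ {factorAt s j (n+1)}).ncard + 1 = (W (n+1)).ncard :=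
      Set.ncard_diff_singleton_add_one hyW (hWfin (n+1))
    omega
  -- pigeonhole
  obtain ⟨i, j, hij, hfe⟩ : ∃ i j : ℕ, i < j ∧ factorAt s i n = factorAt s j n := by
    have : Finite (W n) := (hWfin n).to_subtype
    obtain ⟨a, b, hne, he⟩ := Finite.exists_ne_map_eq_of_infinite
      (fun k : ℕ => (⟨factorAt s k n, ⟨k, rfl⟩⟩ : W n))
    have he' : factorAt s a n = factorAt s b n := congrArg Subtype.val he
    rcases lt_or_gt_of_ne hne with h | h
    · exact ⟨a, b, h, he'⟩
    · exact ⟨b, a, h, he'.symm⟩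
  -- propagation
  have Q : ∀ k, factorAt s (i + k) n = factorAt s (j + k) n := by
    intro k
    induction k with
    | zero => simpa using hfe
    | succ k ihk =>
      have hext := uniq _ _ ihk
      rw [factorAt_eq_iff] at hext ⊢
      intro l hl
      have e1 : i + (k+1) + l = i + k + (l+1) := by omega
      have e2 : j + (k+1) + l = j + k + (l+1) := by omega
      rw [e1, e2]
      exact hext (l+1) (by omega)
  have hLetter : ∀ k, s (i + k + n) = s (j + k + n) := by
    intro k
    have hext := uniq _ _ (Q k)
    rw [factorAt_eq_iff] at hext
    exact hext n (by omega)
  refine hnp (j - i) (by omega) ⟨i + n, fun t ht => ?_⟩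
  obtain ⟨k, rfl⟩ : ∃ k, t = i + k + n := ⟨t - i - n, by omega⟩
  have e : i + k + n + (j - i) = j + k + n := by omega
  rw [e]
  exact (hLetter k).symm
end

section
/- If α is an equidistributed infinite permutation with p_α(n) = n for all n ≥ 1, then the underlying binary word s of α is aperiodic (not ultimately periodic). -/
open Filter

lemma nat_div_decomp (v d M : ℕ) (hd : 0 < d) (hM : M = v / d) :
    ∃ R, R < d ∧ v = M * d + R :=
  ⟨v % d, Nat.mod_lt _ hd, by rw [hM, Nat.mul_comm]; exact (Nat.div_add_mod v d).symm⟩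

lemma aux_mono_inc {a : ℕ → ℝ}
    (h01 : ∀ n, a n ∈ Set.Icc (0:ℝ) 1) (hinj : Function.Injective a)
    (heq : ∀ t ∈ Set.Icc (0:ℝ) 1,
      Tendsto (fun n => (((Finset.range n).filter fun i => a i < t).card : ℝ) / n)
        atTop (nhds t))
    (c d : ℕ) (hd : 1 ≤ d)
    (hm : ∀ i : ℕ, a (c + i * d) < a (c + (i + 1) * d)) : False := by
  set x : ℕ → ℝ := fun i => a (c + i * d) with hxdef
  have hxmono : StrictMono x := strictMono_nat_of_lt_succ (fun i => hm i)
  have hbdd : BddAbove (Set.range x) := by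
    refine ⟨1, ?_⟩
    rintro y ⟨i, rfl⟩
    exact (h01 _).2
  set L : ℝ := ⨆ i, x i with hLdef
  have hL : Tendsto x atTop (nhds L) := tendsto_atTop_ciSup hxmono.monotone hbdd
  have hxleL : ∀ i, x i ≤ L := fun i => le_ciSup hbdd i
  have hxltL : ∀ i, x i < L := fun i => lt_of_lt_of_le (hxmono (Nat.lt_succ_self i)) (hxleL (i+1))
  have hL0 : 0 < L := by
    have h0 : (0:ℝ) ≤ x 0 := (h01 _).1
    exact lt_of_le_of_lt h0 (hxltL 0)
  have hL1 : L ≤ 1 := ciSup_le (fun i => (h01 _).2)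
  set D : ℝ := (d : ℝ) with hDdef
  have hD1 : (1:ℝ) ≤ D := by rw [hDdef]; exact_mod_cast hd
  have hD0 : (0:ℝ) < D := lt_of_lt_of_le one_pos hD1
  set ε : ℝ := min (L/2) (1/(4*D)) with hεdef
  have hε0 : 0 < ε := lt_min (by linarith) (by positivity)
  have hεL : ε ≤ L/2 := min_le_left _ _
  have hεD : ε ≤ 1/(4*D) := min_le_right _ _
  set t₁ : ℝ := L - ε with ht₁def
  set t₂ : ℝ := min (L + ε) 1 with ht₂def
  have ht₁0 : 0 ≤ t₁ := by simp only [ht₁def]; linarith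
  have ht₁1 : t₁ ≤ 1 := by simp only [ht₁def]; linarith
  have ht₂0 : 0 ≤ t₂ := le_min (by linarith) zero_le_one
  have ht₂1 : t₂ ≤ 1 := min_le_right _ _
  have hLt₂ : L ≤ t₂ := le_min (by linarith) hL1
  have ht₁₂ : t₁ ≤ t₂ := le_trans (by linarith) hLt₂
  have hgap : t₂ - t₁ ≤ 2*ε := by
    have : t₂ ≤ L + ε := min_le_left _ _
    simp only [ht₁def]; linarith
  -- find K with t₁ < x K
  have hexK : ∃ K, t₁ < x K := by
    have : t₁ < L := by simp only [ht₁def]; linarith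
    exact exists_lt_of_lt_ciSup (by simpa [hLdef] using this)
  obtain ⟨K, hK⟩ := hexK
  have htail : ∀ k, K ≤ k → t₁ < x k ∧ x k < t₂ :=
    fun k hk => ⟨lt_of_lt_of_le hK (hxmono.monotone hk), lt_of_lt_of_le (hxltL k) hLt₂⟩
  -- counting function
  set F : ℝ → ℕ → ℕ := fun t n => ((Finset.range n).filter fun i => a i < t).card with hFdef
  have hsubQP : ∀ n, ((Finset.range n).filter fun i => a i < t₁) ⊆
      ((Finset.range n).filter fun i => a i < t₂) := by
    intro n
    intro i hi
    rw [Finset.mem_filter] at hi ⊢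
    exact ⟨hi.1, lt_of_lt_of_le hi.2 ht₁₂⟩
  -- lower bound on difference
  have hlow : ∀ n : ℕ, c + K*d + d ≤ n → ((n:ℝ) - (c + K*d + d : ℕ))/D ≤ ((F t₂ n : ℝ) - F t₁ n) := by
    intro n hn
    set M : ℕ := (n - (c + K*d)) / d with hMdef
    have hcKd : c + K*d ≤ n := by omega
    have hd0 : 0 < d := by omega
    obtain ⟨R, hRd, hvR⟩ := nat_div_decomp (n - (c + K*d)) d M hd0 hMdef
    have hnR : n = M * d + R + (c + K*d) := (Nat.sub_eq_iff_eq_add hcKd).mp hvR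
    have hMle : ∀ k, k < M → c + (K + k)*d < n := by
      intro k hk
      have h2 : (k + 1) * d ≤ M * d := Nat.mul_le_mul_right d hk
      have h3 : (K + k) * d = K * d + k * d := Nat.add_mul _ _ _
      have h4 : (k + 1) * d = k * d + d := Nat.succ_mul _ _
      linarith
    set S : Finset ℕ := (Finset.range M).image (fun k => c + (K + k)*d) with hSdef
    have hScard : S.card = M := by
      rw [hSdef, Finset.card_image_of_injective _ ?_, Finset.card_range]
      intro k k' hkk'
      simp only [] at hkk'
      have h5 : (K + k) * d = (K + k') * d := Nat.add_left_cancel hkk'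
      have h6 := Nat.eq_of_mul_eq_mul_right (show 0 < d by omega) h5
      omega
    have hSsub : S ⊆ ((Finset.range n).filter fun i => a i < t₂) \
        ((Finset.range n).filter fun i => a i < t₁) := by
      intro i hi
      rw [hSdef] at hi
      simp only [Finset.mem_image, Finset.mem_range] at hi
      obtain ⟨k, hk, rfl⟩ := hi
      have hxk := htail (K + k) (Nat.le_add_right _ _)
      simp only [Finset.mem_sdiff, Finset.mem_filter, Finset.mem_range, not_and, not_lt]
      exact ⟨⟨hMle k hk, hxk.2⟩, fun _ => le_of_lt hxk.1⟩
    have hcard : M ≤ F t₂ n - F t₁ n := by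
      have h1 := Finset.card_le_card hSsub
      rw [hScard, Finset.card_sdiff_of_subset (hsubQP n)] at h1
      exact h1
    have hFle : F t₁ n ≤ F t₂ n := Finset.card_le_card (hsubQP n)
    have hcast : (M : ℝ) ≤ (F t₂ n : ℝ) - F t₁ n := by
      have h7 : (M : ℝ) ≤ ((F t₂ n - F t₁ n : ℕ) : ℝ) := by exact_mod_cast hcard
      rwa [Nat.cast_sub hFle] at h7
    refine le_trans ?_ hcast
    rw [div_le_iff₀ hD0]
    have h8 : (n:ℝ) < (c:ℝ) + K*d + M*d + d := by
      have : (n:ℕ) < c + K*d + M*d + d := by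
        have h2 : (K:ℕ)*d + M*d + R + c = n := by linarith
        linarith
      exact_mod_cast this
    have h9 : ((c + K*d + d : ℕ) : ℝ) = (c:ℝ) + K*d + d := by push_cast; ring
    rw [h9, hDdef]
    nlinarith [h8]
  -- limit of difference
  have hlim : Tendsto (fun n => ((F t₂ n : ℝ))/n - ((F t₁ n : ℝ))/n) atTop (nhds (t₂ - t₁)) :=
    (heq t₂ ⟨ht₂0, ht₂1⟩).sub (heq t₁ ⟨ht₁0, ht₁1⟩)
  -- lower limit
  set C : ℝ := ((c + K*d + d : ℕ) : ℝ) with hCdef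
  have hφ : Tendsto (fun n : ℕ => ((n:ℝ) - C)/D / n) atTop (nhds (1/D)) := by
    have h1 : Tendsto (fun n : ℕ => (1 - C/n)/D) atTop (nhds ((1 - 0)/D)) := by
      exact Tendsto.div_const (tendsto_const_nhds.sub (tendsto_const_div_atTop_nhds_zero_nat C)) D
    simp only [sub_zero] at h1
    apply h1.congr'
    filter_upwards [eventually_gt_atTop 0] with n hn
    have hn0 : (n:ℝ) ≠ 0 := Nat.cast_ne_zero.mpr (by omega)
    have hDne : D ≠ 0 := ne_of_gt hD0
    have e1 : 1 - C/(n:ℝ) = ((n:ℝ) - C)/(n:ℝ) := by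
      rw [sub_div, div_self hn0]
    rw [e1, div_div, div_div, mul_comm]
  have hge : t₂ - t₁ ≥ 1/D := by
    apply le_of_tendsto_of_tendsto' hφ hlim
    intro n
    have hrhs : ((F t₂ n : ℝ))/n - ((F t₁ n : ℝ))/n = ((F t₂ n : ℝ) - (F t₁ n : ℝ))/n := by
      rw [sub_div]
    by_cases hn : c + K*d + d ≤ n
    · have h1 := hlow n hn
      have hn0 : (0:ℝ) < n := by
        have : 0 < n := by omega
        exact_mod_cast this
      rw [hrhs]
      exact (div_le_div_iff_of_pos_right hn0).mpr h1
    · rw [hrhs]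
      have h1 : (n:ℝ) - C ≤ 0 := by
        have h2 : (n:ℝ) ≤ C := by
          rw [hCdef]; exact_mod_cast Nat.le_of_lt (by omega)
        linarith
      have h2 : ((n:ℝ) - C)/D/(n:ℝ) ≤ 0 := by
        apply div_nonpos_iff.mpr
        right
        constructor
        · exact div_nonpos_iff.mpr (Or.inr ⟨h1, hD0.le⟩)
        · positivity
      have h3 : (0:ℝ) ≤ ((F t₂ n : ℝ) - (F t₁ n : ℝ))/n := by
        apply div_nonneg _ (by positivity)
        have := Finset.card_le_card (hsubQP n)
        have h4 : ((F t₁ n : ℕ):ℝ) ≤ ((F t₂ n : ℕ):ℝ) := by exact_mod_cast this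
        linarith
      linarith
  have : 2 * ε < 1/D := by
    have : 1/(4*D) < 1/(2*D) := by
      apply div_lt_div_of_pos_left one_pos (by linarith)
      linarith
    have h2 : 2 * ε ≤ 2 * (1/(4*D)) := by linarith
    calc 2*ε ≤ 2*(1/(4*D)) := h2
    _ = 1/(2*D) := by field_simp; ring
    _ < 1/D := by
        apply div_lt_div_of_pos_left one_pos hD0
        linarith
  linarith

lemma aux_equidist_flip {a : ℕ → ℝ} (ha : EquidistSeq a) : EquidistSeq (fun n => 1 - a n) := by
  obtain ⟨h01, hinj, heq⟩ := ha
  refine ⟨?_, ?_, ?_⟩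
  · intro n
    have := h01 n
    simp only [Set.mem_Icc] at this ⊢
    constructor <;> linarith [this.1, this.2]
  · intro i j hij
    have : a i = a j := by
      have h2 : (1:ℝ) - a i = 1 - a j := hij
      linarith
    exact hinj this
  · intro t ht
    simp only [Set.mem_Icc] at ht
    have ht' : 1 - t ∈ Set.Icc (0:ℝ) 1 := by simp only [Set.mem_Icc]; constructor <;> linarith
    -- count{1 - a i < t} = count{a i > 1 - t} = n - count{a i < 1 - t} - count{a i = 1 - t}
    have key : ∀ n : ℕ,
        ((Finset.range n).filter fun i => 1 - a i < t).card
        = n - ((Finset.range n).filter fun i => a i < 1 - t).card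
            - ((Finset.range n).filter fun i => a i = 1 - t).card := by
      intro n
      have hdisj : ∀ i ∈ Finset.range n, (1 - a i < t) ↔ ¬ (a i < 1 - t ∨ a i = 1 - t) := by
        intro i _
        constructor
        · rintro h (h1 | h2) <;> linarith
        · intro h
          push_neg at h
          rcases lt_trichotomy (a i) (1 - t) with h1 | h1 | h1
          · linarith [h.1]
          · exact absurd h1 h.2
          · linarith
      have hsplit : ((Finset.range n).filter fun i => (a i < 1 - t ∨ a i = 1 - t)).card
          = ((Finset.range n).filter fun i => a i < 1 - t).card
            + ((Finset.range n).filter fun i => a i = 1 - t).card := by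
        rw [Finset.filter_or]
        rw [Finset.card_union_of_disjoint]
        rw [Finset.disjoint_filter]
        intro i _ h1 h2
        exact absurd h2 (ne_of_lt h1)
      have hcompl : ((Finset.range n).filter fun i => 1 - a i < t).card
          = n - ((Finset.range n).filter fun i => (a i < 1 - t ∨ a i = 1 - t)).card := by
        rw [Finset.filter_congr hdisj]
        rw [Finset.filter_not, Finset.card_sdiff_of_subset (Finset.filter_subset _ _), Finset.card_range]
      rw [hcompl, hsplit]
      omega
    have hEbound : ∀ n : ℕ, ((Finset.range n).filter fun i => a i = 1 - t).card ≤ 1 := by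
      intro n
      apply Finset.card_le_one.mpr
      intro i hi j hj
      rw [Finset.mem_filter] at hi hj
      exact hinj (hi.2.trans hj.2.symm)
    have hle : ∀ n : ℕ, ((Finset.range n).filter fun i => a i < 1 - t).card
        + ((Finset.range n).filter fun i => a i = 1 - t).card ≤ n := by
      intro n
      have := Finset.card_le_card (show ((Finset.range n).filter fun i => (a i < 1 - t ∨ a i = 1 - t)) ⊆ Finset.range n from Finset.filter_subset _ _)
      rw [Finset.card_range] at this
      rw [Finset.filter_or] at this
      refine le_trans ?_ this
      rw [Finset.card_union_of_disjoint]
      rw [Finset.disjoint_filter]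
      intro i _ h1 h2
      exact absurd h2 (ne_of_lt h1)
    -- now the limit
    have hEtend : Tendsto (fun n : ℕ => (((Finset.range n).filter fun i => a i = 1 - t).card : ℝ)/n) atTop (nhds 0) := by
      apply squeeze_zero (fun n => by positivity) (fun n => ?_) tendsto_one_div_atTop_nhds_zero_nat
      by_cases hn : n = 0
      · subst hn; simp
      · have hn0 : (0:ℝ) < n := by exact_mod_cast Nat.pos_of_ne_zero hn
        apply (div_le_div_iff_of_pos_right hn0).mpr
        exact_mod_cast hEbound n
    have hmain : Tendsto (fun n : ℕ => 1 - (((Finset.range n).filter fun i => a i < 1 - t).card : ℝ)/n - (((Finset.range n).filter fun i => a i = 1 - t).card : ℝ)/n) atTop (nhds (1 - (1 - t) - 0)) :=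
      (tendsto_const_nhds.sub (heq (1-t) ht')).sub hEtend
    have hval : (1 : ℝ) - (1 - t) - 0 = t := by ring
    rw [hval] at hmain
    apply hmain.congr'
    filter_upwards [eventually_gt_atTop 0] with n hn
    have hn0 : (n:ℝ) ≠ 0 := Nat.cast_ne_zero.mpr (by omega)
    have hC := hle n
    have hcast : ((((Finset.range n).filter fun i => 1 - a i < t).card : ℕ) : ℝ)
        = (n:ℝ) - (((Finset.range n).filter fun i => a i < 1 - t).card : ℝ) - (((Finset.range n).filter fun i => a i = 1 - t).card : ℝ) := by
      rw [key n]
      have h1 : ((Finset.range n).filter fun i => a i < 1 - t).card ≤ n := by omega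
      have h2 : ((Finset.range n).filter fun i => a i = 1 - t).card ≤ n - ((Finset.range n).filter fun i => a i < 1 - t).card := by omega
      rw [Nat.cast_sub h2, Nat.cast_sub h1]
    show _ = _
    rw [hcast]
    field_simp

lemma aux_mono_dec {a : ℕ → ℝ} (ha : EquidistSeq a) (c d : ℕ) (hd : 1 ≤ d)
    (hm : ∀ i : ℕ, a (c + (i + 1) * d) < a (c + i * d)) : False := by
  obtain ⟨h01, hinj, heq⟩ := aux_equidist_flip ha
  exact aux_mono_inc h01 hinj heq c d hd (fun i => by simpa using hm i)

def Psi (x : ℕ → ℝ) (L k : ℕ) : Fin L → Fin L → Prop := fun u v => x (k + u) < x (k + v)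

lemma psi_restrict {x : ℕ → ℝ} {L k k' : ℕ} (h : Psi x (L+1) k = Psi x (L+1) k') :
    Psi x L k = Psi x L k' := by
  funext u v
  have h1 := congrFun (congrFun h u.castSucc) v.castSucc
  simpa [Psi, Fin.coe_castSucc] using h1

lemma psi_shift {x : ℕ → ℝ} {L k k' : ℕ} (h : Psi x (L+1) k = Psi x (L+1) k') :
    Psi x L (k+1) = Psi x L (k'+1) := by
  funext u v
  have h1 := congrFun (congrFun h u.succ) v.succ
  simp only [Psi, Fin.val_succ] at h1 ⊢
  have e1 : ∀ j : ℕ, ∀ w : ℕ, j + (w + 1) = j + 1 + w := by omega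
  rw [e1 k u, e1 k v, e1 k' u, e1 k' v] at h1
  exact h1

/-- Value of an entry of Psi. -/
lemma psi_entry {x : ℕ → ℝ} {L k k' : ℕ} (h : Psi x L k = Psi x L k')
    (u v : ℕ) (hu : u < L) (hv : v < L) :
    (x (k + u) < x (k + v)) ↔ (x (k' + u) < x (k' + v)) := by
  have h1 := congrFun (congrFun h ⟨u, hu⟩) ⟨v, hv⟩
  simp only [Psi] at h1
  exact h1 ▸ Iff.rfl

lemma perm_MH (x : ℕ → ℝ) (hinj : ∀ i j : ℕ, i ≠ j → x i ≠ x j)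
    (hnm : ∀ K τ : ℕ, 1 ≤ τ →
      (¬ ∀ i : ℕ, x (K + i*τ) < x (K + (i+1)*τ)) ∧ (¬ ∀ i : ℕ, x (K + (i+1)*τ) < x (K + i*τ))) :
    ∀ m : ℕ, ∃ κ : Fin (m+1) → ℕ, ∀ i i' : Fin (m+1), i ≠ i' →
      Psi x (m+1) (κ i) ≠ Psi x (m+1) (κ i') := by
  intro m
  induction m with
  | zero =>
    exact ⟨fun _ => 0, fun i i' hii' => absurd (Fin.ext (by omega : (i:ℕ) = (i':ℕ))) hii'⟩
  | succ m ih =>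
    obtain ⟨κ, hκ⟩ := ih
    by_contra hno
    push_neg at hno
    -- hno : ∀ κ' : Fin (m+2) → ℕ, ∃ i i', i ≠ i' ∧ Psi x (m+2) (κ' i) = Psi x (m+2) (κ' i')
    -- Step 1: injectivity transfer
    have INJ : ∀ k k' : ℕ, Psi x (m+1+1) k = Psi x (m+1+1) k' →
        Psi x (m+1) k = Psi x (m+1) k' := fun k k' h => psi_restrict h
    have INJ' : ∀ k k' : ℕ, Psi x (m+1) k = Psi x (m+1) k' →
        Psi x (m+1+1) k = Psi x (m+1+1) k' := by
      intro k k' h1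
      by_contra h2
      -- build an injective family of size m+2
      by_cases hcase : ∀ i : Fin (m+1), Psi x (m+1) (κ i) ≠ Psi x (m+1) k
      · -- snoc k
        obtain ⟨i, i', hii', heq⟩ := hno (Fin.snoc κ k)
        -- analyze
        rcases Fin.eq_castSucc_or_eq_last i with ⟨i₀, rfl⟩ | rfl <;>
          rcases Fin.eq_castSucc_or_eq_last i' with ⟨i₁, rfl⟩ | rfl
        · rw [Fin.snoc_castSucc, Fin.snoc_castSucc] at heq
          exact hκ i₀ i₁ (fun hh => hii' (by rw [hh])) (INJ _ _ heq)
        · rw [Fin.snoc_castSucc, Fin.snoc_last] at heq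
          exact hcase i₀ (INJ _ _ heq)
        · rw [Fin.snoc_last, Fin.snoc_castSucc] at heq
          exact hcase i₁ (INJ _ _ heq).symm
        · exact hii' rfl
      · push_neg at hcase
        obtain ⟨i₀, hi₀⟩ := hcase
        -- pick w among k, k' with Psi (m+2) w ≠ Psi (m+2) (κ i₀)
        have hW : ∃ w : ℕ, Psi x (m+1) w = Psi x (m+1) k ∧
            Psi x (m+1+1) w ≠ Psi x (m+1+1) (κ i₀) := by
          by_cases hk2 : Psi x (m+1+1) k = Psi x (m+1+1) (κ i₀)
          · refine ⟨k', h1.symm, ?_⟩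
            intro hk'
            exact h2 (hk2.trans hk'.symm)
          · exact ⟨k, rfl, hk2⟩
        obtain ⟨w, hw1, hw2⟩ := hW
        obtain ⟨i, i', hii', heq⟩ := hno (Fin.snoc κ w)
        rcases Fin.eq_castSucc_or_eq_last i with ⟨j₀, rfl⟩ | rfl <;>
          rcases Fin.eq_castSucc_or_eq_last i' with ⟨j₁, rfl⟩ | rfl
        · rw [Fin.snoc_castSucc, Fin.snoc_castSucc] at heq
          exact hκ j₀ j₁ (fun hh => hii' (by rw [hh])) (INJ _ _ heq)
        · rw [Fin.snoc_castSucc, Fin.snoc_last] at heq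
          by_cases hj : j₀ = i₀
          · subst hj
            exact hw2 heq.symm
          · have : Psi x (m+1) (κ j₀) = Psi x (m+1) w := INJ _ _ heq
            rw [hw1, ← hi₀] at this
            exact hκ j₀ i₀ hj this
        · rw [Fin.snoc_last, Fin.snoc_castSucc] at heq
          by_cases hj : j₁ = i₀
          · subst hj
            exact hw2 heq
          · have : Psi x (m+1) (κ j₁) = Psi x (m+1) w := INJ _ _ heq.symm
            rw [hw1, ← hi₀] at this
            exact hκ j₁ i₀ hj this
        · exact hii' rfl
    -- Step 2: find a repeat among the first m+2 positions
    obtain ⟨i, i', hii', hrep⟩ := hno (fun i : Fin (m+2) => (i : ℕ))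
    -- wlog i < i'
    have hKey : ∃ K τ : ℕ, 1 ≤ τ ∧ τ ≤ m + 1 ∧ Psi x (m+1+1) K = Psi x (m+1+1) (K + τ) := by
      rcases lt_or_gt_of_ne (fun hh : (i:ℕ) = (i':ℕ) => hii' (Fin.ext hh)) with hlt | hgt
      · exact ⟨i, i' - i, by omega, by omega, by
          have : (i:ℕ) + ((i':ℕ) - i) = (i':ℕ) := by omega
          rw [this]; exact hrep⟩
      · exact ⟨i', (i:ℕ) - i', by omega, by omega, by
          have : (i':ℕ) + ((i:ℕ) - i') = (i:ℕ) := by omega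
          rw [this]; exact hrep.symm⟩
    obtain ⟨K, τ, hτ1, hτm, hKτ⟩ := hKey
    -- Step 3: determinism → periodicity
    have DET : ∀ k k' : ℕ, Psi x (m+1+1) k = Psi x (m+1+1) k' →
        Psi x (m+1+1) (k+1) = Psi x (m+1+1) (k'+1) :=
      fun k k' h => INJ' _ _ (psi_shift h)
    have PER : ∀ dlt : ℕ, Psi x (m+1+1) (K + dlt) = Psi x (m+1+1) (K + τ + dlt) := by
      intro dlt
      induction dlt with
      | zero => simpa using hKτ
      | succ dl ihd =>
        have := DET _ _ ihd
        have e1 : K + dl + 1 = K + (dl + 1) := by omega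
        have e2 : K + τ + dl + 1 = K + τ + (dl + 1) := by omega
        rwa [e1, e2] at this
    have PER2 : ∀ i : ℕ, Psi x (m+1+1) (K + i*τ) = Psi x (m+1+1) K := by
      intro i
      induction i with
      | zero => simp
      | succ i ihd =>
        have h3 := PER (i * τ)
        have e1 : K + τ + i * τ = K + (i+1) * τ := by ring_nf
        rw [e1] at h3
        exact h3.symm.trans ihd
    -- Step 4: extract monotone AP
    have hcmp : ∀ i : ℕ, (x (K + i*τ) < x (K + (i+1)*τ)) ↔ (x K < x (K + τ)) := by
      intro i
      have h4 := psi_entry (PER2 i) 0 τ (by omega) (by omega)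
      simp only [Nat.add_zero] at h4
      have e1 : K + i*τ + τ = K + (i+1)*τ := by ring_nf
      rw [e1] at h4
      exact h4
    rcases lt_trichotomy (x K) (x (K + τ)) with hlt | heq' | hgt
    · exact (hnm K τ hτ1).1 (fun i => (hcmp i).mpr hlt)
    · exact hinj K (K + τ) (by omega) heq'
    · refine (hnm K τ hτ1).2 (fun i => ?_)
      rcases lt_trichotomy (x (K + (i+1)*τ)) (x (K + i*τ)) with h5 | h5 | h5
      · exact h5
      · exact absurd h5 (hinj _ _ (by
          have : (i+1)*τ ≠ i * τ := by
            intro hh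
            have := Nat.eq_of_mul_eq_mul_right (by omega : 0 < τ) hh
            omega
          omega))
      · exact absurd ((hcmp i).mp h5) (asymm hgt)

/-- iterated periodicity -/
lemma per_iter (s : ℕ → ℕ) (q N₁ : ℕ) (hper : ∀ i ≥ N₁, s (i + q) = s i) :
    ∀ x ≥ N₁, ∀ k : ℕ, s (x + k * q) = s x := by
  intro x hx k
  induction k with
  | zero => simp
  | succ k ihk =>
    have h1 : s (x + k * q + q) = s (x + k * q) := hper _ (by omega)
    have e1 : x + k * q + q = x + (k+1) * q := by ring_nf
    rw [e1] at h1
    rw [h1, ihk]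

/-- same residue, both beyond threshold -/
lemma per_congr (s : ℕ → ℕ) (q N₁ : ℕ) (hq : 1 ≤ q) (hper : ∀ i ≥ N₁, s (i + q) = s i)
    (x y : ℕ) (hx : N₁ ≤ x) (hy : N₁ ≤ y) (hxy : x % q = y % q) : s x = s y := by
  rcases le_total x y with h | h
  · obtain ⟨k, hk⟩ : ∃ k, y - x = q * k := (Nat.modEq_iff_dvd' h).mp hxy
    have : y = x + k * q := by rw [Nat.mul_comm k q, ← hk]; omega
    rw [this, per_iter s q N₁ hper x hx k]
  · obtain ⟨k, hk⟩ : ∃ k, x - y = q * k := (Nat.modEq_iff_dvd' h).mp hxy.symm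
    have : x = y + k * q := by rw [Nat.mul_comm k q, ← hk]; omega
    rw [this, per_iter s q N₁ hper y hy k]

lemma word_sep (s : ℕ → ℕ) (q N₁ : ℕ) (hq : 1 ≤ q)
    (hper : ∀ i ≥ N₁, s (i + q) = s i)
    (hmin : ∀ e, 1 ≤ e → e < q → ¬ ∃ N : ℕ, ∀ i ≥ N, s (i + e) = s i)
    (z z' : ℕ) (hz : N₁ ≤ z) (hz' : N₁ ≤ z')
    (hw : ∀ w < 2*q, s (z + w) = s (z' + w)) : z % q = z' % q := by
  wlog hle : z ≤ z' generalizing z z'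
  · exact (this z' z hz' hz (fun w hw' => (hw w hw').symm) (by omega)).symm
  set δ : ℕ := (z' - z) % q with hδdef
  by_cases hδ0 : δ = 0
  · have h1 : q ∣ (z' - z) := Nat.dvd_of_mod_eq_zero hδ0
    obtain ⟨k, hk⟩ := h1
    have h2 : z' = z + k * q := by rw [Nat.mul_comm k q, ← hk]; omega
    rw [h2]
    simp [Nat.add_mul_mod_self_right]
  · exfalso
    have hδq : δ < q := Nat.mod_lt _ (by omega)
    -- window δ-periodicity
    have hwin : ∀ w, w < 2*q → s (z + w + δ) = s (z + w) := by
      intro w hw'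
      obtain ⟨Q, hQ⟩ : ∃ Q, z' - z = Q * q + δ :=
        ⟨(z'-z)/q, by rw [hδdef, Nat.mul_comm]; exact (Nat.div_add_mod _ _).symm⟩
      have h2 : z' + w = (z + w + δ) + Q * q := by omega
      have h4 : s (z' + w) = s (z + w + δ) := by
        rw [h2]
        exact per_iter s q N₁ hper _ (by omega) _
      rw [← h4, ← hw w hw']
    -- W machinery
    set W : ℕ → ℕ := fun v => s (N₁ + v % q) with hWdef
    have W1 : ∀ v v' : ℕ, v % q = v' % q → W v = W v' := by
      intro v v' hvv'
      simp only [hWdef, hvv']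
    have W2 : ∀ x, N₁ ≤ x → s x = W (x - N₁) := by
      intro x hx
      apply per_congr s q N₁ hq hper x (N₁ + (x - N₁) % q) hx (by omega)
      have h5 : Nat.ModEq q (N₁ + (x - N₁) % q) (N₁ + (x - N₁)) :=
        Nat.ModEq.add_left N₁ (Nat.mod_modEq _ _)
      have e1 : N₁ + (x - N₁) = x := by omega
      rw [e1] at h5
      exact h5.symm
    have W3 : ∀ v : ℕ, W (v + δ) = W v := by
      intro v
      set c₀ : ℕ := (z - N₁) % q with hc₀def
      have hc₀q : c₀ < q := Nat.mod_lt _ (by omega)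
      set i : ℕ := ((v % q) + q - c₀) % q with hidef
      have hiq : i < q := Nat.mod_lt _ (by omega)
      have hcong : Nat.ModEq q (c₀ + i) v := by
        calc c₀ + i ≡ c₀ + (v % q + q - c₀) [MOD q] := Nat.ModEq.add_left c₀ (Nat.mod_modEq _ _)
          _ = v % q + q := by omega
          _ ≡ v % q [MOD q] := by
              show (v % q + q) % q = (v % q) % q
              exact Nat.add_mod_right _ _
          _ ≡ v [MOD q] := Nat.mod_modEq v q
      have hzc : Nat.ModEq q (z - N₁) c₀ := (Nat.mod_modEq (z - N₁) q).symm
      calc W (v + δ) = W (z - N₁ + i + δ) := by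
              apply W1
              exact (((hzc.add_right i).add_right δ).trans (hcong.add_right δ)).symm
        _ = s (z + i + δ) := by
              rw [W2 (z + i + δ) (by omega)]
              apply W1
              have : z + i + δ - N₁ = z - N₁ + i + δ := by omega
              rw [this]
        _ = s (z + i) := hwin i (by omega)
        _ = W (z - N₁ + i) := by
              rw [W2 (z + i) (by omega)]
              have : z + i - N₁ = z - N₁ + i := by omega
              rw [this]
        _ = W v := W1 _ _ ((hzc.add_right i).trans hcong)
    -- iterate
    have W4 : ∀ u v : ℕ, W (v + u * δ) = W v := by
      intro u
      induction u with
      | zero => simp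
      | succ u ihu =>
        intro v
        have e1 : v + (u+1) * δ = (v + δ) + u * δ := by ring
        rw [e1, ihu (v + δ), W3 v]
    -- Bezout
    set e : ℕ := Nat.gcd δ q with hedef
    have he1 : 1 ≤ e := Nat.gcd_pos_of_pos_right _ (by omega)
    have heq' : e < q := by
      have h6 : e ∣ δ := Nat.gcd_dvd_left _ _
      have h7 : e ≤ δ := Nat.le_of_dvd (by omega) h6
      omega
    have hbez : ∃ U V : ℕ, U * δ = e + V * q := by
      have hb := Nat.gcd_eq_gcd_ab δ q
      set A : ℤ := Nat.gcdA δ q with hAdef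
      set B : ℤ := Nat.gcdB δ q with hBdef
      set t : ℤ := (A.natAbs + B.natAbs + 1 : ℤ) with htdef
      have ht0 : 0 < t := by positivity
      set U' : ℤ := A + t * q with hU'def
      set V' : ℤ := δ * t - B with hV'def
      have htge : (A.natAbs : ℤ) + B.natAbs + 1 ≤ t := le_of_eq htdef.symm
      have hU'0 : 0 ≤ U' := by
        have hq1 : (1:ℤ) ≤ (q:ℤ) := by exact_mod_cast hq
        have h8 : t * 1 ≤ t * q := mul_le_mul_of_nonneg_left hq1 (le_of_lt ht0)
        rw [mul_one] at h8
        have h9 : -(A.natAbs : ℤ) ≤ A := by omega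
        omega
      have hV'0 : 0 ≤ V' := by
        have hδ1 : (1:ℤ) ≤ (δ:ℤ) := by exact_mod_cast (by omega : 1 ≤ δ)
        have h8 : 1 * t ≤ (δ:ℤ) * t := mul_le_mul_of_nonneg_right hδ1 (le_of_lt ht0)
        rw [one_mul] at h8
        have h9 : B ≤ (B.natAbs : ℤ) := by omega
        omega
      refine ⟨U'.toNat, V'.toNat, ?_⟩
      have hkey : U' * δ = (e:ℤ) + V' * q := by
        rw [hU'def, hV'def]
        have hbz : (e:ℤ) = δ * A + q * B := hb
        linear_combination -hbz
      have h10 : (U'.toNat : ℤ) = U' := Int.toNat_of_nonneg hU'0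
      have h11 : (V'.toNat : ℤ) = V' := Int.toNat_of_nonneg hV'0
      have : (U'.toNat * δ : ℤ) = ((e + V'.toNat * q : ℕ) : ℤ) := by
        push_cast
        rw [h10, h11]
        exact hkey
      exact_mod_cast this
    obtain ⟨U, V, hUV⟩ := hbez
    have W6 : ∀ v : ℕ, W (v + e) = W v := by
      intro v
      calc W (v + e) = W (v + e + V * q) := by
              apply W1
              simp [Nat.add_mul_mod_self_right]
        _ = W (v + U * δ) := by rw [show v + e + V * q = v + U * δ by omega]
        _ = W v := W4 U v
    -- contradiction with minimality
    apply hmin e he1 heq'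
    refine ⟨N₁, fun x hx => ?_⟩
    rw [W2 (x + e) (by omega), W2 x hx, show x + e - N₁ = (x - N₁) + e by omega, W6]

theorem stmt13 (r : ℕ → ℕ → Prop) (h : EquidistPerm r)
    (hcompl : ∀ n : ℕ, 1 ≤ n → permComplexity r n = n) :
    ¬ ∃ p : ℕ, 1 ≤ p ∧ UltPeriodicWord (underlying r) p := by
  classical
  rintro ⟨p, hp1, hup⟩
  obtain ⟨a, ha, hrep⟩ := h
  obtain ⟨h01, hinj, heqd⟩ := ha
  set s : ℕ → ℕ := underlying r with hsdef
  have hex : ∃ q : ℕ, 1 ≤ q ∧ UltPeriodicWord s q := ⟨p, hp1, hup⟩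
  obtain ⟨q, ⟨hq1, N₁, hper⟩, hmin'⟩ :
      ∃ q : ℕ, (1 ≤ q ∧ UltPeriodicWord s q) ∧ ∀ e < q, ¬(1 ≤ e ∧ UltPeriodicWord s e) :=
    ⟨Nat.find hex, Nat.find_spec hex, fun e he => Nat.find_min hex he⟩
  have hmin : ∀ e, 1 ≤ e → e < q → ¬ ∃ N : ℕ, ∀ i ≥ N, s (i + e) = s i := by
    intro e he1 helt hcon
    exact hmin' e helt ⟨he1, hcon⟩
  -- basic facts about s
  have hs0 : ∀ i : ℕ, s i = 0 ↔ r i (i+1) := by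
    intro i
    by_cases hri : r i (i+1) <;> simp [hsdef, underlying, hri]
  have hane : ∀ i j : ℕ, i ≠ j → a i ≠ a j := fun i j hij hc => hij (hinj hc)
  have hnr : ∀ i j : ℕ, i ≠ j → ¬ r i j → r j i := by
    intro i j hij hnrij
    rw [hrep] at hnrij ⊢
    rcases lt_trichotomy (a i) (a j) with h1 | h1 | h1
    · exact absurd h1 hnrij
    · exact absurd h1 (hane i j hij)
    · exact h1
  -- q = 1 is impossible
  have hq2 : 2 ≤ q := by
    by_contra hq2
    have hq1' : q = 1 := by omega
    rw [hq1'] at hper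
    -- s constant from N₁ on
    have hconst : ∀ i, N₁ ≤ i → s i = s N₁ := by
      intro i hi
      obtain ⟨k, rfl⟩ : ∃ k, i = N₁ + k := ⟨i - N₁, by omega⟩
      induction k with
      | zero => rfl
      | succ k ihk =>
        have h2 := hper (N₁ + k) (by omega)
        have e1 : N₁ + k + 1 = N₁ + (k+1) := by omega
        rw [e1] at h2
        rw [h2]
        exact ihk (by omega)
    by_cases hcase : r N₁ (N₁ + 1)
    · apply aux_mono_inc h01 hinj heqd N₁ 1 le_rfl
      intro i
      have h3 : s (N₁ + i) = 0 := by
        rw [hconst (N₁ + i) (by omega)]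
        exact (hs0 N₁).mpr hcase
      have h4 := (hs0 (N₁ + i)).mp h3
      rw [hrep] at h4
      simpa [Nat.mul_one, add_assoc] using h4
    · apply aux_mono_dec ⟨h01, hinj, heqd⟩ N₁ 1 le_rfl
      intro i
      have h3 : s (N₁ + i) ≠ 0 := by
        rw [hconst (N₁ + i) (by omega)]
        intro hc
        exact hcase ((hs0 N₁).mp hc)
      have h4 : ¬ r (N₁ + i) (N₁ + i + 1) := fun hc => h3 ((hs0 _).mpr hc)
      have h5 := hnr _ _ (by omega) h4
      rw [hrep] at h5
      simpa [Nat.mul_one, add_assoc] using h5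
  -- main case
  set n : ℕ := 2*q + 1 with hndef
  -- per-class sequences
  have hclass : ∀ j : Fin q, ∃ κ : Fin 3 → ℕ, ∀ i i' : Fin 3, i ≠ i' →
      Psi (fun k => a (N₁ + (j:ℕ) + k * q)) 3 (κ i) ≠ Psi (fun k => a (N₁ + (j:ℕ) + k * q)) 3 (κ i') := by
    intro j
    set x : ℕ → ℝ := fun k => a (N₁ + (j:ℕ) + k * q) with hxdef
    have hxinj : ∀ i i' : ℕ, i ≠ i' → x i ≠ x i' := by
      intro i i' hii' hc
      apply hii'
      have h2 := hinj hc
      have h3 : i * q = i' * q := Nat.add_left_cancel h2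
      exact Nat.eq_of_mul_eq_mul_right (by omega) h3
    have hxnm : ∀ K τ : ℕ, 1 ≤ τ →
        (¬ ∀ i : ℕ, x (K + i*τ) < x (K + (i+1)*τ)) ∧
        (¬ ∀ i : ℕ, x (K + (i+1)*τ) < x (K + i*τ)) := by
      intro K τ hτ
      have e1 : ∀ i : ℕ, N₁ + (j:ℕ) + (K + i*τ) * q = (N₁ + (j:ℕ) + K*q) + i * (τ*q) := by
        intro i; ring
      constructor
      · intro hm
        apply aux_mono_inc h01 hinj heqd (N₁ + (j:ℕ) + K*q) (τ*q) (Nat.mul_pos (by omega) (by omega))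
        intro i
        have h2 := hm i
        simp only [hxdef] at h2
        rwa [e1 i, e1 (i+1)] at h2
      · intro hm
        apply aux_mono_dec ⟨h01, hinj, heqd⟩ (N₁ + (j:ℕ) + K*q) (τ*q) (Nat.mul_pos (by omega) (by omega))
        intro i
        have h2 := hm i
        simp only [hxdef] at h2
        rwa [e1 i, e1 (i+1)] at h2
    exact perm_MH x hxinj hxnm 2
  choose κ hκ using hclass
  -- the factor family
  set pos : Fin q → Fin 3 → ℕ := fun j i => N₁ + (j:ℕ) + (κ j i) * q with hposdef
  set G : Fin q × Fin 3 → (Fin n → Fin n → Prop) :=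
    fun w => permFactor r (pos w.1 w.2) n with hGdef
  -- injectivity of G
  have hGinj : Function.Injective G := by
    rintro ⟨j, i⟩ ⟨j', i'⟩ hG
    simp only [hGdef] at hG
    -- word factor equality
    have hword : ∀ w, w < 2*q → s (pos j i + w) = s (pos j' i' + w) := by
      intro w hw
      have hu : w < n := by omega
      have hv : w + 1 < n := by omega
      have hpe := congrFun (congrFun hG ⟨w, hu⟩) ⟨w+1, hv⟩
      simp only [permFactor] at hpe
      simp only [hsdef, underlying]
      rw [show pos j i + w + 1 = pos j i + (w+1) by omega,
          show pos j' i' + w + 1 = pos j' i' + (w+1) by omega]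
      rw [hpe]
    -- residues agree
    have hres : (pos j i) % q = (pos j' i') % q :=
      word_sep s q N₁ (by omega) hper hmin _ _
        (by simp only [hposdef]; exact le_trans (Nat.le_add_right _ _) (Nat.le_add_right _ _))
        (by simp only [hposdef]; exact le_trans (Nat.le_add_right _ _) (Nat.le_add_right _ _)) hword
    have hjj' : j = j' := by
      have h2 : (N₁ + (j:ℕ)) % q = (N₁ + (j':ℕ)) % q := by
        have e2 : ∀ (jj : Fin q) (ii : Fin 3), pos jj ii % q = (N₁ + (jj:ℕ)) % q := by
          intro jj ii
          simp [hposdef, Nat.add_mul_mod_self_right]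
        rw [← e2 j i, ← e2 j' i', hres]
      have h3 : Nat.ModEq q (N₁ + (j:ℕ)) (N₁ + (j':ℕ)) := h2
      have h4 : Nat.ModEq q (j:ℕ) (j':ℕ) := Nat.ModEq.add_left_cancel' N₁ h3
      have h5 : (j:ℕ) % q = (j':ℕ) % q := h4
      rw [Nat.mod_eq_of_lt j.isLt, Nat.mod_eq_of_lt j'.isLt] at h5
      exact Fin.ext h5
    subst hjj'
    -- same class: use distinctness of Psi values
    have hii' : i = i' := by
      by_contra hii'
      apply hκ j i i' hii'
      funext u v
      have hu : (u:ℕ) * q < n := by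
        have h5 := u.isLt
        have h6 : (u:ℕ) * q ≤ 2 * q := Nat.mul_le_mul_right q (by omega)
        exact lt_of_le_of_lt h6 (by omega)
      have hv : (v:ℕ) * q < n := by
        have h5 := v.isLt
        have h6 : (v:ℕ) * q ≤ 2 * q := Nat.mul_le_mul_right q (by omega)
        exact lt_of_le_of_lt h6 (by omega)
      have hpe := congrFun (congrFun hG ⟨(u:ℕ)*q, hu⟩) ⟨(v:ℕ)*q, hv⟩
      simp only [permFactor] at hpe
      have e3 : ∀ (ii : Fin 3) (ww : Fin 3), pos j ii + (ww:ℕ)*q = N₁ + (j:ℕ) + (κ j ii + (ww:ℕ)) * q := by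
        intro ii ww
        simp only [hposdef]
        ring
      have h8 : (a (pos j i + (u:ℕ)*q) < a (pos j i + (v:ℕ)*q)) ↔
          (a (pos j i' + (u:ℕ)*q) < a (pos j i' + (v:ℕ)*q)) :=
        ((hrep _ _).symm.trans (iff_of_eq hpe)).trans (hrep _ _)
      simp only [Psi]
      rw [← e3 i u, ← e3 i v, ← e3 i' u, ← e3 i' v]
      exact propext h8
    rw [hii']
  -- counting
  set S : Set (Fin n → Fin n → Prop) := {f | ∃ m, f = permFactor r m n} with hSdef
  have hSn : S.ncard = n := hcompl n (by omega)
  have hfin : S.Finite := by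
    rcases S.finite_or_infinite with h2 | h2
    · exact h2
    · rw [Set.Infinite.ncard h2] at hSn
      omega
  have hsub : Set.range G ⊆ S := by
    rintro f ⟨w, rfl⟩
    exact ⟨pos w.1 w.2, rfl⟩
  have hcard : (Set.range G).ncard = q * 3 := by
    rw [← Set.image_univ, Set.ncard_image_of_injective _ hGinj, Set.ncard_univ]
    simp [Nat.card_eq_fintype_card]
  have hle2 : q * 3 ≤ n := by
    rw [← hSn, ← hcard]
    exact Set.ncard_le_ncard hsub hfin
  omega
end

section
/- Let α be an infinite permutation whose underlying word s is ultimately periodic with minimal period p ≥ 2, and suppose no subpermutation of α along an arithmetic progression with difference p is ultimately monotone. Then p_α(p+1) ≥ 2p; in particular p_α(n) = n for all n is impossible. -/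
open Filter

section AuxStmt14

private lemma periodIter (w : ℕ → ℕ) (p N0 : ℕ) (hper : ∀ i ≥ N0, w (i + p) = w i) :
    ∀ j ≥ N0, ∀ t, w (j + t * p) = w j := by
  intro j hj t
  induction t with
  | zero => simp
  | succ t ih =>
      have h : j + (t + 1) * p = (j + t * p) + p := by ring
      rw [h, hper _ (by omega), ih]

open Classical in
/-- The underlying word of a length-(p+1) pattern. -/
private noncomputable def patWord (p : ℕ) (f : Fin (p+1) → Fin (p+1) → Prop) : List ℕ :=
  List.ofFn fun k : Fin p => if f k.castSucc k.succ then 0 else 1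

private lemma patWord_permFactor (r : ℕ → ℕ → Prop) (p m : ℕ) :
    patWord p (permFactor r m (p+1)) = factorAt (underlying r) m p := by
  apply List.ext_getElem
  · simp [patWord, factorAt]
  · intro n h1 h2
    simp only [patWord, factorAt, List.getElem_ofFn, List.getElem_map, List.getElem_range]
    simp only [permFactor, underlying, Fin.coe_castSucc, Fin.val_succ]
    rfl

private lemma factorNe_aux (w : ℕ → ℕ) (p N0 : ℕ) (hp : 2 ≤ p)
    (hper : ∀ i ≥ N0, w (i + p) = w i)
    (hminper : ∀ q : ℕ, 1 ≤ q → q < p → ¬ UltPeriodicWord w q)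
    {m m' : ℕ} (hm : N0 ≤ m) (hle : m ≤ m') (hmod : m % p ≠ m' % p)
    (heq : factorAt w m p = factorAt w m' p) : False := by
  set d := m' - m with hd
  have hd0 : d % p ≠ 0 := by
    intro h
    apply hmod
    obtain ⟨t, ht⟩ := Nat.dvd_of_mod_eq_zero h
    have hm'eq : m' = m + p * t := by omega
    rw [hm'eq, Nat.add_mul_mod_self_left]
  have hstep1 : ∀ k < p, w (m + k + d) = w (m + k) := by
    intro k hk
    have hlen : k < (factorAt w m p).length := by simp [factorAt]; omega
    have h1 := List.getElem_of_eq heq hlen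
    simp only [factorAt, List.getElem_map, List.getElem_range] at h1
    rw [show m' + k = m + k + d by omega] at h1
    exact h1.symm
  have hstep2 : ∀ j ≥ m, w (j + d) = w j := by
    intro j hj
    obtain ⟨k, t, hk, hjeq⟩ : ∃ k t, k < p ∧ j = m + k + t * p := by
      refine ⟨(j - m) % p, (j - m) / p, Nat.mod_lt _ (by omega), ?_⟩
      have h2 : (j - m) % p + (j - m) / p * p = j - m := Nat.mod_add_div' (j - m) p
      calc j = m + (j - m) := by omega
        _ = m + ((j - m) % p + (j - m) / p * p) := by rw [h2]
        _ = m + (j - m) % p + (j - m) / p * p := by rw [Nat.add_assoc]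
    have e1 : w j = w (m + k) := by
      rw [hjeq]; exact periodIter w p N0 hper (m + k) (by omega) t
    have e2 : w (j + d) = w (m + k + d) := by
      rw [show j + d = (m + k + d) + t * p by rw [hjeq]; ring]
      exact periodIter w p N0 hper (m + k + d) (by omega) t
    rw [e2, hstep1 k hk, ← e1]
  refine hminper (d % p) (by omega) (Nat.mod_lt _ (by omega)) ⟨m, ?_⟩
  intro j hj
  have h4 : d % p + d / p * p = d := Nat.mod_add_div' d p
  have e3 : j + d = j + d % p + d / p * p := by rw [Nat.add_assoc, h4]
  have e4 : w (j + d) = w (j + d % p) := by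
    rw [e3]; exact periodIter w p N0 hper (j + d % p) (by omega) (d / p)
  rw [← e4, hstep2 j hj]

end AuxStmt14


theorem stmt14 (r : ℕ → ℕ → Prop) [IsStrictTotalOrder ℕ r] (p : ℕ) (hp : 2 ≤ p)
    (hper : UltPeriodicWord (underlying r) p)
    (hminper : ∀ q : ℕ, 1 ≤ q → q < p → ¬ UltPeriodicWord (underlying r) q)
    (hnomon : ∀ i : ℕ, ¬ ∃ K : ℕ,
      (∀ k ≥ K, r (i + k * p) (i + (k + 1) * p)) ∨
        (∀ k ≥ K, r (i + (k + 1) * p) (i + k * p))) :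
    2 * p ≤ permComplexity r (p + 1) ∧
      ¬ ∀ n : ℕ, 1 ≤ n → permComplexity r n = n := by
  classical
  obtain ⟨N0, hN0⟩ := hper
  set w := underlying r with hw
  -- For each residue i < p, find large positions mu (going up across step p) and md (going down)
  have key : ∀ i : Fin p, ∃ mu md : ℕ, N0 ≤ mu ∧ N0 ≤ md ∧ mu % p = (i : ℕ) ∧
      md % p = (i : ℕ) ∧ r mu (mu + p) ∧ ¬ r md (md + p) := by
    intro i
    have h := hnomon (i : ℕ)
    push_neg at h
    obtain ⟨h1, h2⟩ := h N0
    obtain ⟨k1, hk1, hk1'⟩ := h1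
    obtain ⟨k2, hk2, hk2'⟩ := h2
    have hk1p : k1 ≤ k1 * p := Nat.le_mul_of_pos_right k1 (by omega)
    have hk2p : k2 ≤ k2 * p := Nat.le_mul_of_pos_right k2 (by omega)
    have hmd : ¬ r ((i : ℕ) + k1 * p) ((i : ℕ) + k1 * p + p) := by
      rw [show (i : ℕ) + k1 * p + p = (i : ℕ) + (k1 + 1) * p by ring]
      exact hk1'
    have hmu : r ((i : ℕ) + k2 * p) ((i : ℕ) + k2 * p + p) := by
      have hne : (i : ℕ) + k2 * p ≠ (i : ℕ) + k2 * p + p := by omega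
      have htr := trichotomous_of r ((i : ℕ) + k2 * p) ((i : ℕ) + k2 * p + p)
      rcases htr with h | h | h
      · exact h
      · exact absurd h hne
      · exfalso
        apply hk2'
        rw [show (i : ℕ) + (k2 + 1) * p = (i : ℕ) + k2 * p + p by ring]
        exact h
    refine ⟨(i : ℕ) + k2 * p, (i : ℕ) + k1 * p, by omega, by omega, ?_, ?_, hmu, hmd⟩
    · rw [Nat.add_mul_mod_self_right]; exact Nat.mod_eq_of_lt i.isLt
    · rw [Nat.add_mul_mod_self_right]; exact Nat.mod_eq_of_lt i.isLt
  choose mu md hmu1 hmd1 hmu2 hmd2 hmu3 hmd3 using key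
  set g : Fin p × Bool → (Fin (p+1) → Fin (p+1) → Prop) :=
    fun x => permFactor r (if x.2 then mu x.1 else md x.1) (p+1) with hg
  have hpos : ∀ x : Fin p × Bool, N0 ≤ (if x.2 then mu x.1 else md x.1) ∧
      (if x.2 then mu x.1 else md x.1) % p = (x.1 : ℕ) := by
    rintro ⟨i, b⟩; cases b
    · exact ⟨hmd1 i, hmd2 i⟩
    · exact ⟨hmu1 i, hmu2 i⟩
  have hinj : Function.Injective g := by
    rintro ⟨i, b⟩ ⟨j, c⟩ hgeq
    simp only [hg] at hgeq
    set m1 := if b then mu i else md i with hm1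
    set m2 := if c then mu j else md j with hm2
    have hp1 := hpos ⟨i, b⟩
    have hp2 := hpos ⟨j, c⟩
    simp only [← hm1, ← hm2] at hp1 hp2
    have hij : i = j := by
      by_contra hne
      have hmodne : m1 % p ≠ m2 % p := by
        rw [hp1.2, hp2.2]
        exact fun h => hne (Fin.ext h)
      have hfac : factorAt w m1 p = factorAt w m2 p := by
        rw [hw, ← patWord_permFactor, ← patWord_permFactor, hgeq]
      rcases le_total m1 m2 with hle | hle
      · exact factorNe_aux w p N0 hp hN0 hminper hp1.1 hle hmodne hfac
      · exact factorNe_aux w p N0 hp hN0 hminper hp2.1 hle (Ne.symm hmodne) hfac.symm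
    subst hij
    have hent := congrFun (congrFun hgeq (0 : Fin (p+1))) (Fin.last p)
    have e1 : permFactor r m1 (p+1) (0 : Fin (p+1)) (Fin.last p) = r m1 (m1 + p) := by
      simp [permFactor, Fin.last]
    have e2 : permFactor r m2 (p+1) (0 : Fin (p+1)) (Fin.last p) = r m2 (m2 + p) := by
      simp [permFactor, Fin.last]
    rw [e1, e2] at hent
    have hbc : b = c := by
      cases b <;> cases c
      · rfl
      · exfalso
        rw [hm1, hm2] at hent
        simp only [Bool.false_eq_true, if_false, if_true] at hent
        have hu := hmu3 i
        rw [← hent] at hu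
        exact hmd3 i hu
      · exfalso
        rw [hm1, hm2] at hent
        simp only [Bool.false_eq_true, if_false, if_true] at hent
        have hu := hmu3 i
        rw [hent] at hu
        exact hmd3 i hu
      · rfl
    subst hbc
    rfl
  have hsub : Set.range g ⊆ {f : Fin (p+1) → Fin (p+1) → Prop | ∃ m, f = permFactor r m (p+1)} := by
    rintro f ⟨x, rfl⟩
    exact ⟨if x.2 then mu x.1 else md x.1, rfl⟩
  have hfin : ({f : Fin (p+1) → Fin (p+1) → Prop | ∃ m, f = permFactor r m (p+1)}).Finite :=
    Set.toFinite _
  have hcard : (Set.range g).ncard = 2 * p := by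
    rw [← Nat.card_coe_set_eq, Nat.card_range_of_injective hinj]
    simp [Nat.card_eq_fintype_card, Nat.mul_comm]
  have main : 2 * p ≤ permComplexity r (p + 1) := by
    rw [permComplexity, ← hcard]
    exact Set.ncard_le_ncard hsub hfin
  refine ⟨main, fun hall => ?_⟩
  have h1 := hall (p + 1) (by omega)
  omega
end

section
/- The Sturmian permutation β_{σ,ρ} has factor complexity p_β(n) = n for all n ≥ 1. -/
open Filter

private lemma walk_up (c δ a b : ℝ) (hδ : 0 < δ) (hδab : δ < b - a) (ha : 0 ≤ a) (hb : b ≤ 1) :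
    ∃ k : ℕ, Int.fract (c + k * δ) ∈ Set.Ioo a b := by
  classical
  set j : ℤ := ⌈c - a⌉ with hjdef
  have hj : c - a ≤ (j : ℝ) := Int.le_ceil _
  have hP : ∃ k : ℕ, a + (j:ℝ) < c + k * δ := by
    obtain ⟨k, hk⟩ := exists_nat_gt ((a + (j:ℝ) - c) / δ)
    refine ⟨k, ?_⟩
    rw [div_lt_iff₀ hδ] at hk
    linarith
  set k := Nat.find hP with hkdef
  have hk : a + (j:ℝ) < c + k * δ := Nat.find_spec hP
  have hk0 : k ≠ 0 := by
    intro h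
    rw [h] at hk
    push_cast at hk
    linarith
  have hkpred : ¬ (a + (j:ℝ) < c + ((k - 1 : ℕ) : ℝ) * δ) := Nat.find_min hP (by omega)
  push_neg at hkpred
  have hcast : ((k - 1 : ℕ) : ℝ) = (k : ℝ) - 1 := by
    have h1 : 1 ≤ k := Nat.one_le_iff_ne_zero.2 hk0
    push_cast [h1]
    ring
  rw [hcast] at hkpred
  have hlt : c + k * δ < b + (j:ℝ) := by nlinarith
  refine ⟨k, ?_⟩
  have hfr : Int.fract (c + k * δ) = c + k * δ - j := by
    rw [← Int.fract_sub_intCast (c + k * δ) j]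
    exact Int.fract_eq_self.2 ⟨by linarith, by linarith⟩
  rw [hfr]
  exact ⟨by linarith, by linarith⟩

private lemma walk_down (c δ a b : ℝ) (hδ : 0 < δ) (hδab : δ < b - a) (ha : 0 ≤ a) (hb : b ≤ 1) :
    ∃ k : ℕ, Int.fract (c - k * δ) ∈ Set.Ioo a b := by
  classical
  set j : ℤ := ⌊c - b⌋ with hjdef
  have hj : (j : ℝ) ≤ c - b := Int.floor_le _
  have hP : ∃ k : ℕ, c - k * δ < b + (j:ℝ) := by
    obtain ⟨k, hk⟩ := exists_nat_gt ((c - b - (j:ℝ)) / δ)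
    refine ⟨k, ?_⟩
    rw [div_lt_iff₀ hδ] at hk
    linarith
  set k := Nat.find hP with hkdef
  have hk : c - k * δ < b + (j:ℝ) := Nat.find_spec hP
  have hk0 : k ≠ 0 := by
    intro h
    rw [h] at hk
    push_cast at hk
    linarith
  have hkpred : ¬ (c - ((k - 1 : ℕ) : ℝ) * δ < b + (j:ℝ)) := Nat.find_min hP (by omega)
  push_neg at hkpred
  have hcast : ((k - 1 : ℕ) : ℝ) = (k : ℝ) - 1 := by
    have h1 : 1 ≤ k := Nat.one_le_iff_ne_zero.2 hk0
    push_cast [h1]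
    ring
  rw [hcast] at hkpred
  have hlt : a + (j:ℝ) < c - k * δ := by nlinarith
  refine ⟨k, ?_⟩
  have hfr : Int.fract (c - k * δ) = c - k * δ - j := by
    rw [← Int.fract_sub_intCast (c - k * δ) j]
    exact Int.fract_eq_self.2 ⟨by linarith, by linarith⟩
  rw [hfr]
  exact ⟨by linarith, by linarith⟩

private lemma dense_orbit (σ ρ : ℝ) (hirr : Irrational σ) (a b : ℝ)
    (ha : 0 ≤ a) (hb : b ≤ 1) (hab : a < b) :
    ∃ m : ℕ, Int.fract (ρ + (m:ℝ) * σ) ∈ Set.Ioo a b := by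
  classical
  obtain (hd | ⟨x, hx⟩) := AddSubgroup.dense_or_cyclic (AddSubgroup.closure {(1:ℝ), σ})
  · obtain ⟨s, hsS, hs⟩ := hd.exists_mem_open isOpen_Ioo
      (⟨(b-a)/2, by constructor <;> [linarith; linarith]⟩ : (Set.Ioo (0:ℝ) (b-a)).Nonempty)
    obtain ⟨p, q, hpq⟩ := AddSubgroup.mem_closure_pair.1 hsS
    obtain ⟨hs0, hsba⟩ := hs
    simp only [zsmul_eq_mul, mul_one] at hpq
    rcases lt_trichotomy q 0 with hq | hq | hq
    · obtain ⟨k, hk⟩ := walk_down ρ s a b hs0 (by linarith) ha hb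
      refine ⟨k * (-q).toNat, ?_⟩
      have h2 : (((-q).toNat : ℕ) : ℝ) = -(q:ℝ) := by
        have h3 := Int.toNat_of_nonneg (by omega : (0:ℤ) ≤ -q)
        exact_mod_cast congrArg (Int.cast : ℤ → ℝ) h3
      have heq : ρ + ((k * (-q).toNat : ℕ) : ℝ) * σ = (ρ - k * s) + (k * p : ℤ) := by
        push_cast [h2]
        nlinarith [hpq]
      rw [heq, Int.fract_add_intCast]
      exact hk
    · exfalso
      subst hq
      simp only [Int.cast_zero, zero_mul, add_zero] at hpq
      have hp0 : (0:ℤ) < p := by exact_mod_cast hpq ▸ hs0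
      have hp1 : (1:ℝ) ≤ (p:ℝ) := by exact_mod_cast hp0
      linarith
    · obtain ⟨k, hk⟩ := walk_up ρ s a b hs0 (by linarith) ha hb
      refine ⟨k * q.toNat, ?_⟩
      have h2 : ((q.toNat : ℕ) : ℝ) = (q:ℝ) := by
        have h3 := Int.toNat_of_nonneg (by omega : (0:ℤ) ≤ q)
        exact_mod_cast congrArg (Int.cast : ℤ → ℝ) h3
      have heq : ρ + ((k * q.toNat : ℕ) : ℝ) * σ = (ρ + k * s) + (-(k * p) : ℤ) := by
        push_cast [h2]
        nlinarith [hpq]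
      rw [heq, Int.fract_add_intCast]
      exact hk
  · exfalso
    have h1 : (1:ℝ) ∈ AddSubgroup.closure {(1:ℝ), σ} :=
      AddSubgroup.subset_closure (Set.mem_insert _ _)
    have hσ : σ ∈ AddSubgroup.closure {(1:ℝ), σ} :=
      AddSubgroup.subset_closure (Set.mem_insert_of_mem _ rfl)
    rw [hx] at h1 hσ
    obtain ⟨m, hm⟩ := AddSubgroup.mem_closure_singleton.1 h1
    obtain ⟨k, hk⟩ := AddSubgroup.mem_closure_singleton.1 hσ
    have hm0 : m ≠ 0 := by rintro rfl; simp at hm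
    have hmr : (m : ℝ) ≠ 0 := Int.cast_ne_zero.2 hm0
    have hxval : x = 1 / (m : ℝ) := by
      field_simp
      rw [mul_comm]
      simpa [zsmul_eq_mul] using hm
    refine hirr ⟨(k : ℚ) / (m : ℚ), ?_⟩
    rw [← hk, hxval, zsmul_eq_mul]
    push_cast
    field_simp

noncomputable def thetaF (σ : ℝ) (n : ℕ) : Fin n → ℝ :=
  fun j => 1 - Int.fract (((j : ℕ) : ℝ) * σ)

noncomputable def gsetF (σ : ℝ) (n : ℕ) (t : ℝ) : Finset (Fin n) :=
  Finset.univ.filter fun j => t < thetaF σ n j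

def GF (σ : ℝ) (n : ℕ) (A : Finset (Fin n)) : Fin n → Fin n → Prop :=
  fun k l => thetaF σ n l - thetaF σ n k <
    (if k ∈ A then (0:ℝ) else 1) - (if l ∈ A then (0:ℝ) else 1)

private lemma fract_shift (x y : ℝ) : Int.fract (x + y) = Int.fract (Int.fract x + y) := by
  rw [show Int.fract x + y = (x + y) - (⌊x⌋ : ℤ) by rw [Int.fract]; push_cast; ring,
    Int.fract_sub_intCast]

private lemma theta_pos (σ : ℝ) (n : ℕ) (j : Fin n) : 0 < thetaF σ n j := by
  have := Int.fract_lt_one (((j:ℕ):ℝ) * σ); unfold thetaF; linarith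

private lemma theta_le_one (σ : ℝ) (n : ℕ) (j : Fin n) : thetaF σ n j ≤ 1 := by
  have := Int.fract_nonneg (((j:ℕ):ℝ) * σ); unfold thetaF; linarith

private lemma theta_zero (σ : ℝ) (n : ℕ) (j : Fin n) (hj : (j:ℕ) = 0) : thetaF σ n j = 1 := by
  unfold thetaF; rw [hj]; norm_num

private lemma fract_theta_pos (σ : ℝ) (hirr : Irrational σ) (n : ℕ) (j : Fin n)
    (hj : (j:ℕ) ≠ 0) : 0 < Int.fract (((j:ℕ):ℝ) * σ) := by
  rw [Int.fract_pos]
  exact (hirr.natCast_mul hj).ne_int _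

private lemma theta_inj (σ : ℝ) (hirr : Irrational σ) (n : ℕ) :
    Function.Injective (thetaF σ n) := by
  intro k l h
  unfold thetaF at h
  have h2 : Int.fract (((k:ℕ):ℝ) * σ) = Int.fract (((l:ℕ):ℝ) * σ) := by linarith
  obtain ⟨z, hz⟩ := Int.fract_eq_fract.1 h2
  by_contra hne
  have hkl : ((k:ℕ):ℝ) - ((l:ℕ):ℝ) ≠ 0 := by
    intro h3
    have h4 : ((k:ℕ):ℝ) = ((l:ℕ):ℝ) := by linarith
    exact hne (Fin.ext (by exact_mod_cast h4))
  have hσ : σ = (z:ℝ) / (((k:ℕ):ℝ) - ((l:ℕ):ℝ)) := by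
    field_simp
    linarith [hz]
  refine hirr ⟨(z:ℚ) / (((k:ℕ):ℚ) - ((l:ℕ):ℚ)), ?_⟩
  rw [hσ]
  push_cast
  norm_num

private lemma fract_formula (σ : ℝ) (n : ℕ) (t : ℝ) (ht : t ∈ Set.Ico (0:ℝ) 1) (j : Fin n) :
    Int.fract (t + ((j:ℕ):ℝ) * σ) =
      t + (1 - thetaF σ n j) - (if j ∈ gsetF σ n t then (0:ℝ) else 1) := by
  obtain ⟨ht0, ht1⟩ := ht
  have hmem : j ∈ gsetF σ n t ↔ t < thetaF σ n j := by
    simp [gsetF]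
  have hf0 : 0 ≤ Int.fract (((j:ℕ):ℝ) * σ) := Int.fract_nonneg _
  have hf1 : Int.fract (((j:ℕ):ℝ) * σ) < 1 := Int.fract_lt_one _
  rw [show t + ((j:ℕ):ℝ) * σ = ((j:ℕ):ℝ) * σ + t by ring, fract_shift]
  by_cases hc : t < thetaF σ n j
  · rw [if_pos (hmem.2 hc)]
    have : Int.fract (((j:ℕ):ℝ) * σ) + t < 1 := by
      have := hc; unfold thetaF at this; linarith
    rw [Int.fract_eq_self.2 ⟨by linarith, this⟩]
    unfold thetaF; ring
  · rw [if_neg (fun h => hc (hmem.1 h))]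
    push_neg at hc
    have h1le : 1 ≤ Int.fract (((j:ℕ):ℝ) * σ) + t := by
      unfold thetaF at hc; linarith
    have := Int.fract_sub_intCast (Int.fract (((j:ℕ):ℝ) * σ) + t) 1
    rw [show ((1:ℤ):ℝ) = (1:ℝ) by norm_num] at this
    rw [← this, Int.fract_eq_self.2 ⟨by linarith, by linarith⟩]
    unfold thetaF; ring

private lemma key_eq (σ : ℝ) (n : ℕ) (t : ℝ) (ht : t ∈ Set.Ico (0:ℝ) 1) :
    (fun k l : Fin n => Int.fract (t + ((k:ℕ):ℝ) * σ) < Int.fract (t + ((l:ℕ):ℝ) * σ))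
      = GF σ n (gsetF σ n t) := by
  funext k l
  apply propext
  rw [fract_formula σ n t ht k, fract_formula σ n t ht l]
  unfold GF
  constructor <;> intro h <;> linarith

private lemma gf_row (σ : ℝ) (hirr : Irrational σ) (n : ℕ) (hn : 1 ≤ n) (t : ℝ)
    (ht : t ∈ Set.Ico (0:ℝ) 1) (l : Fin n) (hl : (l:ℕ) ≠ 0) :
    GF σ n (gsetF σ n t) ⟨0, hn⟩ l ↔ l ∈ gsetF σ n t := by
  have hz : (⟨0, hn⟩ : Fin n) ∈ gsetF σ n t := by
    simp only [gsetF, Finset.mem_filter, Finset.mem_univ, true_and]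
    rw [theta_zero σ n _ rfl]
    exact ht.2
  have hθ1 : thetaF σ n ⟨0, hn⟩ = 1 := theta_zero σ n _ rfl
  have hfp : 0 < Int.fract (((l:ℕ):ℝ) * σ) := fract_theta_pos σ hirr n l hl
  have hfl : Int.fract (((l:ℕ):ℝ) * σ) < 1 := Int.fract_lt_one _
  unfold GF
  rw [if_pos hz, hθ1]
  unfold thetaF
  by_cases hmem : l ∈ gsetF σ n t
  · rw [if_pos hmem]
    constructor <;> intro _
    · exact hmem
    · linarith
  · rw [if_neg hmem]
    constructor <;> intro h
    · linarith
    · exact absurd h hmem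

private lemma card_exists (σ ρ : ℝ) (hirr : Irrational σ) (n : ℕ) (hn : 1 ≤ n)
    (c : ℕ) (hc1 : 1 ≤ c) (hcn : c ≤ n) :
    ∃ m : ℕ, (gsetF σ n (Int.fract (ρ + (m:ℝ) * σ))).card = c := by
  classical
  set θ := thetaF σ n with hθdef
  set h : Fin n → ℕ := fun j => (Finset.univ.filter fun i => θ j ≤ θ i).card with hhdef
  have hinj : Function.Injective h := by
    intro k l hkl
    by_contra hne
    have key : ∀ k l : Fin n, θ k < θ l → h l < h k := by
      intro k l hlt
      apply Finset.card_lt_card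
      constructor
      · intro i hi
        simp only [Finset.mem_filter, Finset.mem_univ, true_and] at hi ⊢
        linarith
      · intro hsub
        have hk : k ∈ Finset.univ.filter fun i => θ k ≤ θ i := by
          simp only [Finset.mem_filter, Finset.mem_univ, true_and]
          exact le_rfl
        have := hsub hk
        simp only [Finset.mem_filter, Finset.mem_univ, true_and] at this
        linarith
    rcases lt_trichotomy (θ k) (θ l) with hlt | heq | hgt
    · have := key k l hlt; omega
    · exact hne (theta_inj σ hirr n heq)
    · have := key l k hgt; omega
  have hrange : ∀ j, h j ∈ Finset.Icc 1 n := by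
    intro j
    simp only [Finset.mem_Icc]
    constructor
    · apply Finset.card_pos.2
      exact ⟨j, by simp⟩
    · calc h j ≤ Finset.univ.card := Finset.card_le_card (Finset.filter_subset _ _)
        _ = n := by simp
  have himage : Finset.image h Finset.univ = Finset.Icc 1 n := by
    apply Finset.eq_of_subset_of_card_le
    · intro x hx
      simp only [Finset.mem_image] at hx
      obtain ⟨j, _, rfl⟩ := hx
      exact hrange j
    · rw [Finset.card_image_of_injective _ hinj]
      simp [Nat.card_Icc]
  have hc : c ∈ Finset.image h Finset.univ := by
    rw [himage]; simp only [Finset.mem_Icc]; omega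
  obtain ⟨j, _, hj⟩ := Finset.mem_image.1 hc
  -- lower threshold
  set Z : Finset ℝ :=
    insert (0:ℝ) ((Finset.univ.filter fun i => θ i < θ j).image θ) with hZdef
  have hZne : Z.Nonempty := ⟨0, Finset.mem_insert_self _ _⟩
  set z := Z.max' hZne with hzdef
  have hz0 : 0 ≤ z := Z.le_max' 0 (Finset.mem_insert_self _ _)
  have hzθ : z < θ j := by
    apply (Finset.max'_lt_iff Z hZne).2
    intro y hy
    rcases Finset.mem_insert.1 hy with rfl | hy
    · exact theta_pos σ n j
    · obtain ⟨i, hi, rfl⟩ := Finset.mem_image.1 hy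
      simp only [Finset.mem_filter, Finset.mem_univ, true_and] at hi
      exact hi
  obtain ⟨m, hm1, hm2⟩ := dense_orbit σ ρ hirr z (θ j) hz0 (theta_le_one σ n j) hzθ
  refine ⟨m, ?_⟩
  set t := Int.fract (ρ + (m:ℝ) * σ) with htdef
  have hgt : gsetF σ n t = Finset.univ.filter fun i => θ j ≤ θ i := by
    unfold gsetF
    apply Finset.filter_congr
    intro i _
    simp only [← hθdef, eq_iff_iff]
    constructor
    · intro hti
      by_contra hij
      push_neg at hij
      have : θ i ≤ z := Z.le_max' _ (Finset.mem_insert_of_mem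
        (Finset.mem_image_of_mem θ (by simp [hij])))
      linarith
    · intro hij
      linarith
  rw [hgt]
  exact hj

theorem stmt15 (σ ρ : ℝ) (hirr : Irrational σ) (h0 : 0 < σ) (h1 : σ < 1)
    (hρ0 : 0 ≤ ρ) (hρ1 : ρ < 1) (n : ℕ) (hn : 1 ≤ n) :
    permComplexity (fun i j : ℕ =>
      Int.fract (ρ + (i : ℝ) * σ) < Int.fract (ρ + (j : ℝ) * σ)) n = n := by
  classical
  set r : ℕ → ℕ → Prop := fun i j : ℕ =>
    Int.fract (ρ + (i : ℝ) * σ) < Int.fract (ρ + (j : ℝ) * σ) with hrdef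
  set F : ℕ → ℝ := fun m => Int.fract (ρ + (m:ℝ) * σ) with hFdef
  have hFmem : ∀ m, F m ∈ Set.Ico (0:ℝ) 1 :=
    fun m => ⟨Int.fract_nonneg _, Int.fract_lt_one _⟩
  -- factor equality
  have factor_eq : ∀ m : ℕ, permFactor r m n = GF σ n (gsetF σ n (F m)) := by
    intro m
    rw [← key_eq σ n (F m) (hFmem m)]
    funext k l
    have hshift : ∀ k : ℕ, Int.fract (ρ + ((m + k : ℕ) : ℝ) * σ)
        = Int.fract (F m + (k:ℝ) * σ) := by
      intro k
      rw [hFdef]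
      simp only
      rw [← fract_shift (ρ + (m:ℝ) * σ) ((k:ℝ) * σ)]
      push_cast
      ring_nf
    show r (m + (k:ℕ)) (m + (l:ℕ)) = _
    rw [hrdef]
    simp only
    rw [hshift (k:ℕ), hshift (l:ℕ)]
  set V : Set (Finset (Fin n)) := Set.range (fun m : ℕ => gsetF σ n (F m)) with hVdef
  have hVfin : V.Finite := Set.toFinite V
  -- the factor set
  have hset : {f : Fin n → Fin n → Prop | ∃ m, f = permFactor r m n} = GF σ n '' V := by
    ext f
    constructor
    · rintro ⟨m, rfl⟩
      exact ⟨gsetF σ n (F m), ⟨m, rfl⟩, (factor_eq m).symm⟩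
    · rintro ⟨A, ⟨m, rfl⟩, rfl⟩
      exact ⟨m, (factor_eq m).symm⟩
  -- z0 membership
  have hz0mem : ∀ t ∈ Set.Ico (0:ℝ) 1, (⟨0, hn⟩ : Fin n) ∈ gsetF σ n t := by
    intro t ht
    simp only [gsetF, Finset.mem_filter, Finset.mem_univ, true_and]
    rw [theta_zero σ n _ rfl]
    exact ht.2
  -- GF injective on V
  have hGinj : Set.InjOn (GF σ n) V := by
    rintro A ⟨m, rfl⟩ B ⟨m', rfl⟩ hAB
    simp only at hAB ⊢
    ext l
    by_cases hl : (l:ℕ) = 0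
    · have : l = ⟨0, hn⟩ := Fin.ext hl
      subst this
      simp [hz0mem _ (hFmem m), hz0mem _ (hFmem m')]
    · rw [← gf_row σ hirr n hn _ (hFmem m) l hl, ← gf_row σ hirr n hn _ (hFmem m') l hl, hAB]
  -- card injective on V
  have hCinj : Set.InjOn (fun A : Finset (Fin n) => A.card) V := by
    rintro A ⟨m, rfl⟩ B ⟨m', rfl⟩ hAB
    simp only at hAB ⊢
    have anti : ∀ t s : ℝ, t ≤ s → gsetF σ n s ⊆ gsetF σ n t := by
      intro t s hts i hi
      simp only [gsetF, Finset.mem_filter, Finset.mem_univ, true_and] at hi ⊢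
      linarith
    rcases le_total (F m) (F m') with hle | hle
    · exact (Finset.eq_of_subset_of_card_le (anti _ _ hle) (le_of_eq hAB)).symm
    · exact Finset.eq_of_subset_of_card_le (anti _ _ hle) (le_of_eq hAB.symm)
  -- card image
  have hCimg : (fun A : Finset (Fin n) => A.card) '' V = Set.Icc 1 n := by
    ext c
    constructor
    · rintro ⟨A, ⟨m, rfl⟩, rfl⟩
      simp only
      constructor
      · exact Finset.card_pos.2 ⟨⟨0, hn⟩, hz0mem _ (hFmem m)⟩
      · calc (gsetF σ n (F m)).card ≤ Finset.univ.card :=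
              Finset.card_le_card (Finset.filter_subset _ _)
          _ = n := by simp
    · rintro ⟨hc1, hcn⟩
      obtain ⟨m, hm⟩ := card_exists σ ρ hirr n hn c hc1 hcn
      exact ⟨gsetF σ n (F m), ⟨m, rfl⟩, hm⟩
  -- conclude
  unfold permComplexity
  rw [hset, Set.ncard_image_of_injOn hGinj, ← Set.ncard_image_of_injOn hCinj, hCimg,
    ← Finset.coe_Icc, Set.ncard_coe_finset, Nat.card_Icc]
  omega
end

section
/- For the Sturmian permutation β_{σ,ρ} and the Sturmian word s = s_{σ,ρ}, and any indices i < j: β[i] ≺ β[j] if and only if the factor s[i..j−1] is light, i.e., contains exactly ⌊(j−i)σ⌋ ones; and β[i] ≻ β[j] if and only if s[i..j−1] is heavy, i.e., contains ⌈(j−i)σ⌉ ones. -/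
open Filter

lemma sturm_step (σ ρ : ℝ) (h0 : 0 < σ) (h1 : σ < 1) (k : ℕ) :
    (if sturmianWord σ ρ k = 1 then (1:ℤ) else 0)
      = ⌊ρ + ((k:ℝ)+1) * σ⌋ - ⌊ρ + (k:ℝ) * σ⌋ := by
  set a : ℝ := ρ + (k:ℝ) * σ with ha
  have hfa : ρ + ((k:ℝ)+1) * σ = (⌊a⌋ : ℝ) + (Int.fract a + σ) := by
    have h' : Int.fract a + (⌊a⌋:ℝ) = a := Int.fract_add_floor a
    have h'' : ρ + ((k:ℝ)+1) * σ = a + σ := by rw [ha]; ring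
    linarith
  have hfloor : ⌊ρ + ((k:ℝ)+1) * σ⌋ = ⌊a⌋ + ⌊Int.fract a + σ⌋ := by
    rw [hfa, Int.floor_intCast_add]
  rw [hfloor]
  unfold sturmianWord
  by_cases h : Int.fract a < 1 - σ
  · have h0' : ⌊Int.fract a + σ⌋ = 0 := by
      refine Int.floor_eq_zero_iff.mpr ⟨?_, ?_⟩
      · linarith [Int.fract_nonneg a]
      · linarith
    have h2 : Int.fract (ρ + (k:ℝ) * σ) + σ < 1 := by show Int.fract a + σ < 1; linarith
    simp [h, h0', h2]
  · have h1' : ⌊Int.fract a + σ⌋ = 1 := by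
      refine Int.floor_eq_iff.mpr ⟨?_, ?_⟩
      · push_cast; linarith
      · push_cast; linarith [Int.fract_lt_one a]
    have h2 : 1 ≤ Int.fract (ρ + (k:ℝ) * σ) + σ := by show 1 ≤ Int.fract a + σ; linarith
    simp [h, h1', h2]

lemma sturm_count (σ ρ : ℝ) (h0 : 0 < σ) (h1 : σ < 1) (i m : ℕ) :
    (((Finset.range m).filter fun k => sturmianWord σ ρ (i + k) = 1).card : ℤ)
      = ⌊ρ + ((i:ℝ)+(m:ℝ)) * σ⌋ - ⌊ρ + (i:ℝ) * σ⌋ := by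
  have h : (((Finset.range m).filter fun k => sturmianWord σ ρ (i + k) = 1).card : ℤ)
      = ∑ k ∈ Finset.range m, (if sturmianWord σ ρ (i + k) = 1 then (1:ℤ) else 0) := by
    rw [Finset.card_filter]
    push_cast
    rfl
  rw [h]
  have hterm : ∀ k ∈ Finset.range m,
      (if sturmianWord σ ρ (i + k) = 1 then (1:ℤ) else 0)
        = (fun n : ℕ => ⌊ρ + ((i:ℝ)+(n:ℝ)) * σ⌋) (k+1) - (fun n : ℕ => ⌊ρ + ((i:ℝ)+(n:ℝ)) * σ⌋) k := by
    intro k _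
    have hs := sturm_step σ ρ h0 h1 (i + k)
    simp only [Nat.cast_add] at hs
    rw [hs]
    simp only []
    push_cast
    ring_nf
  rw [Finset.sum_congr rfl hterm, Finset.sum_range_sub (fun n : ℕ => ⌊ρ + ((i:ℝ)+(n:ℝ)) * σ⌋)]
  simp

theorem stmt16 (σ ρ : ℝ) (hirr : Irrational σ) (h0 : 0 < σ) (h1 : σ < 1)
    (hρ0 : 0 ≤ ρ) (hρ1 : ρ < 1) (i j : ℕ) (hij : i < j) :
    (Int.fract (ρ + (i : ℝ) * σ) < Int.fract (ρ + (j : ℝ) * σ) ↔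
      ((((Finset.range (j - i)).filter fun k => sturmianWord σ ρ (i + k) = 1).card : ℤ)
        = ⌊((j - i : ℕ) : ℝ) * σ⌋)) ∧
    (Int.fract (ρ + (j : ℝ) * σ) < Int.fract (ρ + (i : ℝ) * σ) ↔
      ((((Finset.range (j - i)).filter fun k => sturmianWord σ ρ (i + k) = 1).card : ℤ)
        = ⌈((j - i : ℕ) : ℝ) * σ⌉)) := by
  set m := j - i with hm
  have hm0 : 0 < m := Nat.sub_pos_of_lt hij
  have hjc : (j : ℝ) = (i : ℝ) + (m : ℝ) := by
    rw [hm]; push_cast [Nat.cast_sub hij.le]; ring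
  set x := Int.fract (ρ + (i:ℝ) * σ) with hx
  set y := Int.fract (ρ + (j:ℝ) * σ) with hy
  have hcount : (((Finset.range m).filter fun k => sturmianWord σ ρ (i + k) = 1).card : ℤ)
      = ⌊ρ + ((i:ℝ)+(m:ℝ)) * σ⌋ - ⌊ρ + (i:ℝ) * σ⌋ := sturm_count σ ρ h0 h1 i m
  set c : ℤ := (((Finset.range m).filter fun k => sturmianWord σ ρ (i + k) = 1).card : ℤ)
  have hmir : Irrational ((m:ℝ) * σ) := hirr.natCast_mul hm0.ne'
  have hfr_ir : Irrational (Int.fract ((m:ℝ) * σ)) := by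
    rw [← Int.self_sub_floor]
    exact hmir.sub_intCast _
  have hfr_pos : 0 < Int.fract ((m:ℝ) * σ) := by
    rcases lt_or_eq_of_le (Int.fract_nonneg ((m:ℝ) * σ)) with h | h
    · exact h
    · exact (hfr_ir.ne_int 0 (by exact_mod_cast h.symm)).elim
  have hfr_lt : Int.fract ((m:ℝ) * σ) < 1 := Int.fract_lt_one _
  have hkey : ((c - ⌊(m:ℝ) * σ⌋ : ℤ) : ℝ) = Int.fract ((m:ℝ) * σ) + x - y := by
    have e1 : (⌊ρ + ((i:ℝ)+(m:ℝ)) * σ⌋ : ℝ) = ρ + ((i:ℝ)+(m:ℝ)) * σ - y := by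
      rw [hy, hjc, Int.self_sub_fract]
    have e2 : (⌊ρ + (i:ℝ) * σ⌋ : ℝ) = ρ + (i:ℝ) * σ - x := by
      rw [hx, Int.self_sub_fract]
    have e3 : (⌊(m:ℝ) * σ⌋ : ℝ) = (m:ℝ) * σ - Int.fract ((m:ℝ) * σ) := by
      rw [Int.self_sub_fract]
    push_cast [hcount]
    rw [e1, e2, e3]
    ring
  have hceil : ⌈(m:ℝ) * σ⌉ = ⌊(m:ℝ) * σ⌋ + 1 := by
    refine Int.ceil_eq_iff.mpr ⟨?_, ?_⟩
    · push_cast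
      linarith [Int.floor_le ((m:ℝ) * σ), (hmir.ne_int ⌊(m:ℝ) * σ⌋).lt_or_gt.resolve_left
        (not_lt.mpr (Int.floor_le ((m:ℝ) * σ)))]
    · push_cast
      linarith [Int.lt_floor_add_one ((m:ℝ) * σ)]
  have hx0 : 0 ≤ x := Int.fract_nonneg _
  have hx1 : x < 1 := Int.fract_lt_one _
  have hy0 : 0 ≤ y := Int.fract_nonneg _
  have hy1 : y < 1 := Int.fract_lt_one _
  have hxy : x ≠ y := by
    intro h
    have h2 : ((c - ⌊(m:ℝ) * σ⌋ : ℤ) : ℝ) = Int.fract ((m:ℝ) * σ) := by rw [hkey, h]; ring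
    exact hfr_ir.ne_int (c - ⌊(m:ℝ) * σ⌋) h2.symm
  constructor
  · constructor
    · intro hlt
      have h1' : (c - ⌊(m:ℝ) * σ⌋ : ℤ) < 1 := by
        have : ((c - ⌊(m:ℝ) * σ⌋ : ℤ) : ℝ) < 1 := by rw [hkey]; linarith
        exact_mod_cast this
      have h2' : (-1 : ℤ) < (c - ⌊(m:ℝ) * σ⌋ : ℤ) := by
        have : (-1 : ℝ) < ((c - ⌊(m:ℝ) * σ⌋ : ℤ) : ℝ) := by rw [hkey]; linarith
        exact_mod_cast this
      omega
    · intro hc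
      have h2 : ((0:ℤ) : ℝ) = Int.fract ((m:ℝ) * σ) + x - y := by
        rw [← hkey, hc]; push_cast; ring
      push_cast at h2
      rcases hxy.lt_or_gt with h | h
      · exact h
      · linarith
  · constructor
    · intro hlt
      have h1' : (c - ⌊(m:ℝ) * σ⌋ : ℤ) < 2 := by
        have : ((c - ⌊(m:ℝ) * σ⌋ : ℤ) : ℝ) < 2 := by rw [hkey]; linarith
        exact_mod_cast this
      have h2' : (0 : ℤ) < (c - ⌊(m:ℝ) * σ⌋ : ℤ) := by
        have : (0 : ℝ) < ((c - ⌊(m:ℝ) * σ⌋ : ℤ) : ℝ) := by rw [hkey]; linarith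
        exact_mod_cast this
      rw [hceil]; omega
    · intro hc
      rw [hceil] at hc
      have h2 : ((1:ℤ) : ℝ) = Int.fract ((m:ℝ) * σ) + x - y := by
        rw [← hkey, hc]; push_cast; ring
      push_cast at h2
      rcases hxy.lt_or_gt with h | h
      · linarith
      · exact h
end

section
/- Let α and β be infinite permutations whose underlying word is the same Sturmian word s, and suppose every factor of s of length at most n−1 determines the same factor of α as of β (possible since both have complexity equal to length + 1 of the underlying factor). If v is a factor of s of length n whose associated factors α^v and β^v differ, then they differ only in the relation between their first and last elements. -/
open Filter

lemma factorAt_eq_of_pt {w w' : ℕ → ℕ} {m m' p : ℕ}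
    (h : ∀ k < p, w (m+k) = w' (m'+k)) : factorAt w m p = factorAt w' m' p := by
  unfold factorAt
  apply List.ext_getElem (by simp)
  intro k h1 h2
  simp only [List.getElem_map, List.getElem_range]
  exact h k (by simpa using h1)

lemma factorAt_pointwise {w w' : ℕ → ℕ} {m m' p : ℕ}
    (h : factorAt w m p = factorAt w' m' p) : ∀ k < p, w (m+k) = w' (m'+k) := by
  intro k hk
  have := congrArg (fun u => u[k]?) h
  simpa [factorAt, hk] using this

theorem stmt17 (α β : ℕ → ℕ → Prop) [IsStrictTotalOrder ℕ α] [IsStrictTotalOrder ℕ β]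
    (n : ℕ) (hn : 1 ≤ n)
    (hagree : ∀ m : ℕ, m < n → ∀ i j : ℕ,
      factorAt (underlying α) i m = factorAt (underlying β) j m →
        permFactor α i (m + 1) = permFactor β j (m + 1))
    (i j : ℕ)
    (hv : factorAt (underlying α) i n = factorAt (underlying β) j n)
    (hne : permFactor α i (n + 1) ≠ permFactor β j (n + 1)) :
    ∀ k l : Fin (n + 1),
      ¬ ((k = 0 ∧ l = Fin.last n) ∨ (k = Fin.last n ∧ l = 0)) →
        (permFactor α i (n + 1) k l ↔ permFactor β j (n + 1) k l) := by
  intro k l hkl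
  have hpt : ∀ t < n, underlying α (i+t) = underlying β (j+t) := factorAt_pointwise hv
  have hn' : n - 1 + 1 = n := by omega
  have hkle : (k:ℕ) ≤ n := Nat.lt_succ_iff.mp k.isLt
  have hlle : (l:ℕ) ≤ n := Nat.lt_succ_iff.mp l.isLt
  by_cases hA : (k:ℕ) < n ∧ (l:ℕ) < n
  · have h1 : factorAt (underlying α) i (n-1) = factorAt (underlying β) j (n-1) :=
      factorAt_eq_of_pt (fun t ht => hpt t (by omega))
    have h2 := hagree (n-1) (by omega) i j h1
    rw [hn'] at h2
    have h3 := congrFun (congrFun h2 ⟨(k:ℕ), hA.1⟩) ⟨(l:ℕ), hA.2⟩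
    simp only [permFactor] at h3 ⊢
    exact iff_of_eq h3
  · push_neg at hA
    have hk1 : 1 ≤ (k:ℕ) ∧ 1 ≤ (l:ℕ) := by
      rcases Nat.lt_or_ge (k:ℕ) n with hkn | hkn
      · have hln : (l:ℕ) = n := by omega
        refine ⟨?_, by omega⟩
        by_contra h0
        exact hkl (Or.inl ⟨Fin.ext (show (k:ℕ) = ((0 : Fin (n+1)) : ℕ) by simp only [Fin.val_zero]; omega), Fin.ext hln⟩)
      · have hkn' : (k:ℕ) = n := by omega
        refine ⟨by omega, ?_⟩
        by_contra h0
        exact hkl (Or.inr ⟨Fin.ext hkn', Fin.ext (show (l:ℕ) = ((0 : Fin (n+1)) : ℕ) by simp only [Fin.val_zero]; omega)⟩)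
    have h1 : factorAt (underlying α) (i+1) (n-1) = factorAt (underlying β) (j+1) (n-1) := by
      apply factorAt_eq_of_pt
      intro t ht
      have h := hpt (t+1) (by omega)
      rw [show i+1+t = i+(t+1) by omega, show j+1+t = j+(t+1) by omega]
      exact h
    have h2 := hagree (n-1) (by omega) (i+1) (j+1) h1
    rw [hn'] at h2
    have h3 := congrFun (congrFun h2 ⟨(k:ℕ)-1, by omega⟩) ⟨(l:ℕ)-1, by omega⟩
    simp only [permFactor] at h3 ⊢
    rw [show i+1+((k:ℕ)-1) = i+(k:ℕ) by omega, show i+1+((l:ℕ)-1) = i+(l:ℕ) by omega,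
        show j+1+((k:ℕ)-1) = j+(k:ℕ) by omega, show j+1+((l:ℕ)-1) = j+(l:ℕ) by omega] at h3
    exact iff_of_eq h3
end
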